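/- arXiv:1801.03284 — 9 statements merged into one kernel-verified Lean document; each statement's English description precedes it below -/
import Mathlib

section
/- Let T > 0, let b : [0,∞) → [0,∞) be measurable and bounded on [0,T], and let K be a weakly continuous Markov kernel from [0,∞) to [0,∞). Then there exists a continuous function S_T : [0,T] → [0,1] with S_T(0) = 1 which satisfies the scale equation on [0,T] for parameters (b,K), i.e. for all t ∈ [0,T]: S_T(t) = exp(−∫₀ᵗ b(u)du) + exp(−∫₀ᵗ b(u)du) · ∫₀ᵗ b(s) exp(∫₀ˢ b(u)du) (∫_{[0,T−s)} S_T(s+v) K(s,dv)) ds. -/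
open MeasureTheory ProbabilityTheory Filter Topology

namespace Stmt0Aux

noncomputable def prim (f : ℝ → ℝ) (t : ℝ) : ℝ := ∫ u in (0:ℝ)..t, f u

variable {T L : ℝ} {f : ℝ → ℝ}

lemma integrable_of_bdd_supp (hm : Measurable f) (hL : ∀ x, |f x| ≤ L)
    (hs : ∀ x, x ∉ Set.Ioc (0:ℝ) T → f x = 0) : Integrable f := by
  have hind : f = (Set.Ioc (0:ℝ) T).indicator f := by
    funext x
    by_cases hx : x ∈ Set.Ioc (0:ℝ) T
    · simp [Set.indicator_of_mem hx]
    · simp [Set.indicator_of_notMem hx, hs x hx]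
  rw [hind]
  rw [integrable_indicator_iff measurableSet_Ioc]
  refine Integrable.mono' (integrable_const L) (hm.aestronglyMeasurable.restrict) ?_
  exact Eventually.of_forall fun x => by simpa using hL x
end Stmt0Aux

namespace Stmt0Aux
section prim
variable {T L : ℝ} {f : ℝ → ℝ} (hm : Measurable f) (hnn : ∀ x, 0 ≤ f x)
  (hL : ∀ x, f x ≤ L) (hs : ∀ x, x ∉ Set.Ioc (0:ℝ) T → f x = 0)

include hm hnn hL hs

lemma f_integrable : Integrable f :=
  integrable_of_bdd_supp hm (fun x => by rw [abs_of_nonneg (hnn x)]; exact hL x) hs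

omit hm hnn hL hs in
lemma prim_anti_zero {s t : ℝ} (hst : s ≤ t) (ht : ∀ x ∈ Set.Ioc s t, f x = 0) :
    (∫ u in s..t, f u) = 0 := by
  rw [intervalIntegral.integral_congr_ae (g := fun _ => (0:ℝ))
    (ae_of_all _ fun x hx => by
      rw [Set.uIoc_of_le hst] at hx; exact ht x hx)]
  simp

lemma prim_nonpos {t : ℝ} (ht : t ≤ 0) : prim f t = 0 := by
  rw [prim, intervalIntegral.integral_symm]
  rw [prim_anti_zero ht fun x hx => hs x (fun hx' => absurd hx'.1 (not_lt.2 (hx.2)))]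
  simp

lemma prim_mono : Monotone (prim f) := by
  intro s t hst
  have h1 : prim f t = prim f s + ∫ u in s..t, f u := by
    rw [prim, prim,
      intervalIntegral.integral_add_adjacent_intervals
        ((f_integrable hm hnn hL hs).intervalIntegrable)
        ((f_integrable hm hnn hL hs).intervalIntegrable)]
  rw [h1]
  have : (0:ℝ) ≤ ∫ u in s..t, f u := intervalIntegral.integral_nonneg hst (fun u _ => hnn u)
  linarith

lemma prim_nonneg {t : ℝ} (ht : 0 ≤ t) : 0 ≤ prim f t := by
  have h0 : prim f 0 = 0 := by simp [prim]
  have := prim_mono hm hnn hL hs ht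
  rw [h0] at this; exact this

lemma prim_le_top : ∀ s, prim f s ≤ prim f T := by
  intro s
  rcases le_or_gt s T with h | h
  · exact prim_mono hm hnn hL hs h
  · have h1 : prim f s = prim f T + ∫ u in T..s, f u := by
      rw [prim, prim,
        intervalIntegral.integral_add_adjacent_intervals
          ((f_integrable hm hnn hL hs).intervalIntegrable)
          ((f_integrable hm hnn hL hs).intervalIntegrable)]
    rw [h1, prim_anti_zero h.le fun x hx => hs x (fun hx' => absurd hx'.2 (not_le.2 hx.1))]
    simp

lemma prim_cont : Continuous (prim f) :=
  (f_integrable hm hnn hL hs).continuous_primitive 0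

end prim

lemma ftc_exact {c : ℝ → ℝ} (hc : Continuous c) (t : ℝ) :
    (∫ s in (0:ℝ)..t, c s * Real.exp (prim c s)) = Real.exp (prim c t) - 1 := by
  have hprimc : Continuous (prim c) :=
    intervalIntegral.continuous_primitive (fun a b => hc.intervalIntegrable a b) 0
  have hderiv : ∀ s ∈ Set.uIcc (0:ℝ) t,
      HasDerivAt (fun s => Real.exp (prim c s)) (c s * Real.exp (prim c s)) s := by
    intro s _
    have h1 : HasDerivAt (prim c) (c s) s := (hc.integral_hasStrictDerivAt 0 s).hasDerivAt
    have h2 := h1.exp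
    simpa [mul_comm] using h2
  have hint : IntervalIntegrable (fun s => c s * Real.exp (prim c s)) volume 0 t :=
    (hc.mul (Real.continuous_exp.comp hprimc)).intervalIntegrable _ _
  have := intervalIntegral.integral_eq_sub_of_hasDerivAt hderiv hint
  rw [this]
  simp [prim]

section key
variable {T L : ℝ} {f : ℝ → ℝ} (hm : Measurable f) (hnn : ∀ x, 0 ≤ f x)
  (hL : ∀ x, f x ≤ L) (hf_int : Integrable f) (hBle : ∀ s, prim f s ≤ prim f T)

include hm hnn hL hf_int hBle

lemma key_ineq {t : ℝ} (ht : 0 ≤ t) :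
    (∫ s in (0:ℝ)..t, f s * Real.exp (prim f s)) ≤ Real.exp (prim f t) - 1 := by
  classical
  set β := prim f T with hβ
  have hL0 : 0 ≤ L := le_trans (hnn 0) (hL 0)
  refine le_of_forall_pos_le_add fun ε hε => ?_
  set M₀ : ℝ := Real.exp (β + 1) * (2 * (β + 2)) + Real.exp β with hM₀
  have hβ0 : 0 ≤ β := by
    have : prim f 0 ≤ prim f T := hBle 0
    rw [hβ]; simpa [prim] using this
  have hM₀pos : 0 < M₀ := by positivity
  set ε' : ℝ := min 1 (ε / M₀) with hε'
  have hε'pos : 0 < ε' := lt_min one_pos (div_pos hε hM₀pos)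
  have hε'le1 : ε' ≤ 1 := min_le_left _ _
  have hε'M : ε' * M₀ ≤ ε := by
    have : ε' ≤ ε / M₀ := min_le_right _ _
    calc ε' * M₀ ≤ (ε / M₀) * M₀ := by nlinarith
    _ = ε := div_mul_cancel₀ _ (ne_of_gt hM₀pos)
  -- continuous approximation
  obtain ⟨c₀, -, hc₀close, hc₀cont, hc₀int⟩ :=
    hf_int.exists_hasCompactSupport_integral_sub_le hε'pos
  set c : ℝ → ℝ := fun x => max 0 (min (c₀ x) L) with hc
  have hc_cont : Continuous c := continuous_const.max (hc₀cont.min continuous_const)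
  have hc_nn : ∀ x, 0 ≤ c x := fun x => le_max_left _ _
  have hc_close : ∀ x, |f x - c x| ≤ |f x - c₀ x| := by
    intro x
    have h0 := hnn x; have h1 := hL x
    rcases le_total (c₀ x) 0 with h | h
    · have hcx : c x = 0 := by
        simp only [hc, max_eq_left_iff]
        exact le_trans (min_le_left _ _) h
      rw [hcx, sub_zero, abs_of_nonneg h0]
      have := le_abs_self (f x - c₀ x)
      linarith
    · rcases le_total L (c₀ x) with h2 | h2
      · have hcx : c x = L := by
          simp only [hc, min_eq_right h2, max_eq_right hL0]
        rw [hcx]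
        have h3 := neg_abs_le (f x - c₀ x)
        rw [abs_of_nonpos (by linarith)]
        linarith
      · have hcx : c x = c₀ x := by
          simp only [hc, min_eq_left h2, max_eq_right h]
        rw [hcx]
  have hc_int : Integrable c := by
    refine hc₀int.abs.mono' hc_cont.aestronglyMeasurable (Eventually.of_forall fun x => ?_)
    rw [Real.norm_eq_abs, abs_of_nonneg (hc_nn x)]
    exact max_le (abs_nonneg _) (le_trans (min_le_left _ _) (le_abs_self _))
  have hfc_int : Integrable (fun x => |f x - c x|) := (hf_int.sub hc_int).abs
  have hδ : (∫ x, |f x - c x|) ≤ ε' := by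
    refine le_trans (integral_mono hfc_int (hf_int.sub hc₀int).abs hc_close) ?_
    simpa [Real.norm_eq_abs] using hc₀close
  -- interval integrals of |f - c| are small
  have habs_small : ∀ s : ℝ, 0 ≤ s → (∫ u in (0:ℝ)..s, |f u - c u|) ≤ ε' := by
    intro s hs
    rw [intervalIntegral.integral_of_le hs]
    refine le_trans (setIntegral_le_integral hfc_int
      (Eventually.of_forall fun x => abs_nonneg _)) hδ
  -- primitives are close
  have hBc_close : ∀ s : ℝ, 0 ≤ s → |prim c s - prim f s| ≤ ε' := by
    intro s hs
    have hsub : prim c s - prim f s = ∫ u in (0:ℝ)..s, (c u - f u) := by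
      rw [prim, prim, intervalIntegral.integral_sub (hc_int.intervalIntegrable)
        (hf_int.intervalIntegrable)]
    rw [hsub]
    refine le_trans (intervalIntegral.abs_integral_le_integral_abs hs) ?_
    have : ∀ u, |c u - f u| = |f u - c u| := fun u => abs_sub_comm _ _
    simp_rw [this]
    exact habs_small s hs
  have hBc_le : ∀ s : ℝ, 0 ≤ s → prim c s ≤ β + 1 := by
    intro s hs
    have h1 := hBc_close s hs
    have h2 := hBle s
    have := le_abs_self (prim c s - prim f s)
    linarith
  have hexp_close : ∀ s : ℝ, 0 ≤ s →
      |Real.exp (prim f s) - Real.exp (prim c s)| ≤ Real.exp (β + 1) * (2 * ε') := by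
    intro s hs
    have hid : Real.exp (prim f s) - Real.exp (prim c s) =
        Real.exp (prim c s) * (Real.exp (prim f s - prim c s) - 1) := by
      rw [mul_sub, mul_one, ← Real.exp_add]
      ring_nf
    rw [hid, abs_mul, abs_of_nonneg (Real.exp_nonneg _)]
    have hd : |prim f s - prim c s| ≤ ε' := by
      rw [abs_sub_comm]; exact hBc_close s hs
    have h1 : |Real.exp (prim f s - prim c s) - 1| ≤ 2 * |prim f s - prim c s| :=
      Real.abs_exp_sub_one_le (le_trans hd hε'le1)
    have h2 : Real.exp (prim c s) ≤ Real.exp (β + 1) := Real.exp_le_exp.2 (hBc_le s hs)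
    calc Real.exp (prim c s) * |Real.exp (prim f s - prim c s) - 1|
        ≤ Real.exp (β + 1) * (2 * |prim f s - prim c s|) := by
          apply mul_le_mul h2 h1 (abs_nonneg _) (Real.exp_nonneg _)
      _ ≤ Real.exp (β + 1) * (2 * ε') := by nlinarith [Real.exp_nonneg (β+1)]
  -- integrability facts on [0, t]
  have hprimc_cont : Continuous (prim c) :=
    intervalIntegral.continuous_primitive (fun a b => hc_cont.intervalIntegrable a b) 0
  have hprimf_cont : Continuous (prim f) := hf_int.continuous_primitive 0
  have hint_lhs : IntervalIntegrable (fun s => f s * Real.exp (prim f s)) volume 0 t :=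
    (hf_int.intervalIntegrable).mul_continuousOn
      ((Real.continuous_exp.comp hprimf_cont).continuousOn)
  have hint_c : IntervalIntegrable (fun s => c s * Real.exp (prim c s)) volume 0 t :=
    (hc_cont.mul (Real.continuous_exp.comp hprimc_cont)).intervalIntegrable _ _
  have hint_abs : IntervalIntegrable (fun s => |f s - c s|) volume 0 t :=
    hfc_int.intervalIntegrable
  have hint_cconst : IntervalIntegrable (fun s => c s * (Real.exp (β+1) * (2*ε'))) volume 0 t :=
    (hc_cont.mul continuous_const).intervalIntegrable _ _
  have hint_rhs : IntervalIntegrable (fun s =>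
      c s * Real.exp (prim c s) + (|f s - c s| * Real.exp β + c s * (Real.exp (β+1) * (2*ε'))))
      volume 0 t :=
    hint_c.add ((hint_abs.mul_const _).add hint_cconst)
  -- pointwise bound
  have hpoint : ∀ s ∈ Set.Icc (0:ℝ) t, f s * Real.exp (prim f s) ≤
      c s * Real.exp (prim c s) + (|f s - c s| * Real.exp β + c s * (Real.exp (β+1) * (2*ε'))) := by
    intro s hsmem
    have hs : 0 ≤ s := hsmem.1
    have e1 : f s * Real.exp (prim f s) = c s * Real.exp (prim c s) +
        ((f s - c s) * Real.exp (prim f s) +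
          c s * (Real.exp (prim f s) - Real.exp (prim c s))) := by ring
    rw [e1]
    have b1 : (f s - c s) * Real.exp (prim f s) ≤ |f s - c s| * Real.exp β := by
      have h1 : Real.exp (prim f s) ≤ Real.exp β := Real.exp_le_exp.2 (hBle s)
      have h2 := le_abs_self (f s - c s)
      nlinarith [Real.exp_nonneg (prim f s), abs_nonneg (f s - c s), Real.exp_pos β]
    have b2 : c s * (Real.exp (prim f s) - Real.exp (prim c s)) ≤
        c s * (Real.exp (β+1) * (2*ε')) := by
      have h1 := hexp_close s hs
      have h2 := le_abs_self (Real.exp (prim f s) - Real.exp (prim c s))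
      nlinarith [hc_nn s]
    linarith
  -- main chain
  have hmain : (∫ s in (0:ℝ)..t, f s * Real.exp (prim f s)) ≤
      (∫ s in (0:ℝ)..t, c s * Real.exp (prim c s)) +
      ((∫ s in (0:ℝ)..t, |f s - c s|) * Real.exp β +
        (∫ s in (0:ℝ)..t, c s) * (Real.exp (β+1) * (2*ε'))) := by
    have h1 := intervalIntegral.integral_mono_on ht hint_lhs hint_rhs hpoint
    rw [intervalIntegral.integral_add hint_c ((hint_abs.mul_const _).add hint_cconst),
      intervalIntegral.integral_add (hint_abs.mul_const _) hint_cconst,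
      intervalIntegral.integral_mul_const, intervalIntegral.integral_mul_const] at h1
    exact h1
  -- FTC for c
  have hftc : (∫ s in (0:ℝ)..t, c s * Real.exp (prim c s)) = Real.exp (prim c t) - 1 :=
    ftc_exact hc_cont t
  have hct : (∫ s in (0:ℝ)..t, c s) = prim c t := rfl
  have hprimc_nn : 0 ≤ prim c t := intervalIntegral.integral_nonneg ht fun u _ => hc_nn u
  have hexpct : Real.exp (prim c t) ≤ Real.exp (prim f t) + Real.exp (β+1) * (2*ε') := by
    have h1 := hexp_close t ht
    have h2 := neg_abs_le (Real.exp (prim f t) - Real.exp (prim c t))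
    linarith
  have hfinal : (∫ s in (0:ℝ)..t, f s * Real.exp (prim f s)) ≤
      Real.exp (prim f t) - 1 + ε' * M₀ := by
    have h2 := habs_small t ht
    have h3 := hBc_le t ht
    rw [hftc, hct] at hmain
    have hEβ := Real.exp_nonneg β
    have hEβ1 := Real.exp_nonneg (β+1)
    nlinarith [mul_le_mul_of_nonneg_right h2 hEβ,
      mul_le_mul_of_nonneg_right h3 (by positivity : (0:ℝ) ≤ Real.exp (β+1) * (2*ε'))]
  linarith
end key
end Stmt0Aux

namespace Stmt0Aux

noncomputable def Iop (K : Kernel ℝ ℝ) (T : ℝ) (S : ℝ → ℝ) (s : ℝ) : ℝ :=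
  ∫ v in Set.Ico (0:ℝ) (T - s), S (s + v) ∂(K s)

section Iop
variable {K : Kernel ℝ ℝ} [IsMarkovKernel K] {T : ℝ} {S S₁ S₂ : ℝ → ℝ} {d : ℝ}

lemma integrableOn_comp (hS : Continuous S) (hbd : ∀ x, S x ∈ Set.Icc (0:ℝ) 1) (s : ℝ) :
    IntegrableOn (fun v => S (s + v)) (Set.Ico (0:ℝ) (T - s)) (K s) := by
  refine Integrable.integrableOn ?_
  refine Integrable.mono' (integrable_const 1)
    ((hS.comp (continuous_const.add continuous_id)).aestronglyMeasurable) ?_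
  refine Eventually.of_forall fun v => ?_
  rw [Real.norm_eq_abs, abs_of_nonneg (hbd _).1]
  exact (hbd _).2

lemma meas_Ico_le_one (s : ℝ) : ((K s) (Set.Ico (0:ℝ) (T - s))).toReal ≤ 1 := by
  have h1 : (K s) (Set.Ico (0:ℝ) (T - s)) ≤ 1 := prob_le_one
  exact ENNReal.toReal_le_of_le_ofReal zero_le_one (by simpa using h1)

lemma Iop_mem (hS : Continuous S) (hbd : ∀ x, S x ∈ Set.Icc (0:ℝ) 1) (s : ℝ) :
    Iop K T S s ∈ Set.Icc (0:ℝ) 1 := by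
  constructor
  · exact setIntegral_nonneg measurableSet_Ico fun v _ => (hbd _).1
  · have h2 : Iop K T S s ≤ ∫ _ in Set.Ico (0:ℝ) (T - s), (1:ℝ) ∂(K s) :=
      setIntegral_mono_on (integrableOn_comp hS hbd s)
        (integrableOn_const (measure_ne_top _ _)) measurableSet_Ico
        fun v _ => (hbd _).2
    refine le_trans h2 ?_
    rw [setIntegral_const, smul_eq_mul, mul_one]
    exact meas_Ico_le_one s

lemma Iop_dist (hS₁ : Continuous S₁) (hbd₁ : ∀ x, S₁ x ∈ Set.Icc (0:ℝ) 1)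
    (hS₂ : Continuous S₂) (hbd₂ : ∀ x, S₂ x ∈ Set.Icc (0:ℝ) 1)
    (hd : ∀ x, |S₁ x - S₂ x| ≤ d) (hd0 : 0 ≤ d) (s : ℝ) :
    |Iop K T S₁ s - Iop K T S₂ s| ≤ d := by
  rw [Iop, Iop, ← integral_sub (integrableOn_comp hS₁ hbd₁ s) (integrableOn_comp hS₂ hbd₂ s)]
  have h1 : |∫ v in Set.Ico (0:ℝ) (T - s), (S₁ (s + v) - S₂ (s + v)) ∂(K s)| ≤
      ∫ v in Set.Ico (0:ℝ) (T - s), |S₁ (s + v) - S₂ (s + v)| ∂(K s) := by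
    simpa [Real.norm_eq_abs] using norm_integral_le_integral_norm
      (μ := (K s).restrict (Set.Ico (0:ℝ) (T - s))) (fun v => S₁ (s + v) - S₂ (s + v))
  refine le_trans h1 ?_
  have h2 : (∫ v in Set.Ico (0:ℝ) (T - s), |S₁ (s + v) - S₂ (s + v)| ∂(K s)) ≤
      ∫ _ in Set.Ico (0:ℝ) (T - s), d ∂(K s) :=
    setIntegral_mono_on
      (((integrableOn_comp hS₁ hbd₁ s).sub (integrableOn_comp hS₂ hbd₂ s)).abs)
      (integrableOn_const (measure_ne_top _ _)) measurableSet_Ico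
      fun v _ => hd _
  refine le_trans h2 ?_
  rw [setIntegral_const, smul_eq_mul, measureReal_def]
  nlinarith [meas_Ico_le_one (K := K) (T := T) s, ENNReal.toReal_nonneg
    (a := (K s) (Set.Ico (0:ℝ) (T - s)))]

lemma Iop_meas (hS : Continuous S) : Measurable (Iop K T S) := by
  classical
  set A : Set (ℝ × ℝ) := {p : ℝ × ℝ | 0 ≤ p.2 ∧ p.2 < T - p.1} with hA
  have hAmeas : MeasurableSet A := by
    have h1 : MeasurableSet {p : ℝ × ℝ | 0 ≤ p.2} :=
      measurableSet_le measurable_const measurable_snd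
    have h2 : MeasurableSet {p : ℝ × ℝ | p.2 < T - p.1} :=
      measurableSet_lt measurable_snd (measurable_const.sub measurable_fst)
    exact h1.inter h2
  set G : ℝ × ℝ → ℝ := A.indicator (fun p => S (p.1 + p.2)) with hG
  have hGsm : StronglyMeasurable G :=
    (Measurable.indicator ((hS.comp (continuous_fst.add continuous_snd)).measurable)
      hAmeas).stronglyMeasurable
  have h1 : ∀ s, Iop K T S s = ∫ v, G (s, v) ∂(K s) := by
    intro s
    rw [Iop, ← integral_indicator measurableSet_Ico]
    refine integral_congr_ae (Eventually.of_forall fun v => ?_)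
    show (Set.Ico (0:ℝ) (T - s)).indicator (fun v => S (s + v)) v = G (s, v)
    rw [hG]
    classical
    by_cases hv : (0 ≤ v ∧ v < T - s)
    · rw [Set.indicator_of_mem (Set.mem_Ico.2 hv),
        Set.indicator_of_mem (show (s, v) ∈ A from hv)]
    · rw [Set.indicator_of_notMem (fun h => hv (Set.mem_Ico.1 h)),
        Set.indicator_of_notMem (show (s, v) ∉ A from hv)]
  have h2 : Iop K T S = fun s => ∫ v, G (s, v) ∂(K s) := funext h1
  rw [h2]
  exact hGsm.integral_kernel_prod_right'.measurable
end Iop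

noncomputable def Phi (f : ℝ → ℝ) (K : Kernel ℝ ℝ) (T : ℝ) (S : ℝ → ℝ) (t : ℝ) : ℝ :=
  Real.exp (-(prim f t)) + Real.exp (-(prim f t)) *
    ∫ s in (0:ℝ)..t, f s * Real.exp (prim f s) * Iop K T S s

end Stmt0Aux

namespace Stmt0Aux
section PhiLemmas
variable {T L : ℝ} {f : ℝ → ℝ} {K : Kernel ℝ ℝ} [IsMarkovKernel K] {S S₁ S₂ : ℝ → ℝ} {d : ℝ}
  (hm : Measurable f) (hnn : ∀ x, 0 ≤ f x) (hL : ∀ x, f x ≤ L)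
  (hs : ∀ x, x ∉ Set.Ioc (0:ℝ) T → f x = 0)

include hm hnn hL hs

lemma g_abs_le (hS : Continuous S) (hbd : ∀ x, S x ∈ Set.Icc (0:ℝ) 1) (s : ℝ) :
    |f s * Real.exp (prim f s) * Iop K T S s| ≤ L * Real.exp (prim f T) := by
  have h1 : |Iop K T S s| ≤ 1 := by
    have := Iop_mem (K := K) (T := T) hS hbd s
    rw [abs_le]; constructor <;> [linarith [this.1]; exact this.2]
  have h2 : Real.exp (prim f s) ≤ Real.exp (prim f T) :=
    Real.exp_le_exp.2 (prim_le_top hm hnn hL hs s)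
  rw [abs_mul, abs_mul, abs_of_nonneg (hnn s), abs_of_nonneg (Real.exp_nonneg _)]
  have h3 := hnn s
  have h4 := hL s
  have hL0 : 0 ≤ L := le_trans h3 h4
  calc f s * Real.exp (prim f s) * |Iop K T S s| ≤ f s * Real.exp (prim f s) * 1 :=
        mul_le_mul_of_nonneg_left h1 (mul_nonneg h3 (Real.exp_nonneg _))
    _ = f s * Real.exp (prim f s) := by ring
    _ ≤ L * Real.exp (prim f T) :=
        mul_le_mul h4 h2 (Real.exp_nonneg _) hL0

lemma g_integrable (hS : Continuous S) (hbd : ∀ x, S x ∈ Set.Icc (0:ℝ) 1) :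
    Integrable (fun s => f s * Real.exp (prim f s) * Iop K T S s) := by
  refine integrable_of_bdd_supp (T := T) (L := L * Real.exp (prim f T)) ?_ ?_ ?_
  · exact (hm.mul (Real.measurable_exp.comp (prim_cont hm hnn hL hs).measurable)).mul
      (Iop_meas hS)
  · exact g_abs_le hm hnn hL hs hS hbd
  · intro x hx; rw [hs x hx]; ring

lemma integral_g_zero_of_nonpos (hS : Continuous S) {t : ℝ} (ht : t ≤ 0) :
    (∫ s in (0:ℝ)..t, f s * Real.exp (prim f s) * Iop K T S s) = 0 := by
  rw [intervalIntegral.integral_symm,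
    prim_anti_zero (f := fun s => f s * Real.exp (prim f s) * Iop K T S s) ht
      (fun x hx => by
        have h0 : f x = 0 := hs x (fun hx' => absurd hx'.1 (not_lt.2 hx.2))
        simp [h0])]
  simp

lemma Phi_eq_one_of_nonpos (hS : Continuous S) {t : ℝ} (ht : t ≤ 0) :
    Phi f K T S t = 1 := by
  rw [Phi, prim_nonpos hm hnn hL hs ht, integral_g_zero_of_nonpos hm hnn hL hs hS ht]
  simp

lemma Phi_mem (hS : Continuous S) (hbd : ∀ x, S x ∈ Set.Icc (0:ℝ) 1) (t : ℝ) :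
    Phi f K T S t ∈ Set.Icc (0:ℝ) 1 := by
  rcases lt_or_ge t 0 with h | ht
  · rw [Phi_eq_one_of_nonpos (K := K) hm hnn hL hs hS h.le]; norm_num
  · have hIint := (g_integrable (K := K) hm hnn hL hs hS hbd).intervalIntegrable (a := 0) (b := t)
    have hfe_int : IntervalIntegrable (fun s => f s * Real.exp (prim f s)) volume 0 t :=
      ((f_integrable hm hnn hL hs).intervalIntegrable).mul_continuousOn
        ((Real.continuous_exp.comp (prim_cont hm hnn hL hs)).continuousOn)
    have hInn : 0 ≤ ∫ s in (0:ℝ)..t, f s * Real.exp (prim f s) * Iop K T S s :=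
      intervalIntegral.integral_nonneg ht fun s _ =>
        mul_nonneg (mul_nonneg (hnn s) (Real.exp_nonneg _)) (Iop_mem hS hbd s).1
    have hIle : (∫ s in (0:ℝ)..t, f s * Real.exp (prim f s) * Iop K T S s) ≤
        Real.exp (prim f t) - 1 := by
      refine le_trans (intervalIntegral.integral_mono_on ht hIint hfe_int fun s _ => ?_)
        (key_ineq hm hnn hL (f_integrable hm hnn hL hs) (prim_le_top hm hnn hL hs) ht)
      have h1 := (Iop_mem (K := K) (T := T) hS hbd s).2
      nlinarith [mul_nonneg (hnn s) (Real.exp_nonneg (prim f s))]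
    have hprod : Real.exp (-(prim f t)) * Real.exp (prim f t) = 1 := by
      rw [← Real.exp_add]; simp
    constructor
    · rw [Phi]
      nlinarith [Real.exp_nonneg (-(prim f t))]
    · rw [Phi]
      nlinarith [Real.exp_nonneg (-(prim f t))]

lemma Phi_cont (hS : Continuous S) (hbd : ∀ x, S x ∈ Set.Icc (0:ℝ) 1) :
    Continuous (Phi f K T S) := by
  have h1 : Continuous (prim f) := prim_cont hm hnn hL hs
  have h2 : Continuous fun t => ∫ s in (0:ℝ)..t, f s * Real.exp (prim f s) * Iop K T S s :=
    (g_integrable hm hnn hL hs hS hbd).continuous_primitive 0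
  have h3 : Continuous fun t => Real.exp (-(prim f t)) := Real.continuous_exp.comp h1.neg
  exact h3.add (h3.mul h2)

lemma Phi_dist (hS₁ : Continuous S₁) (hbd₁ : ∀ x, S₁ x ∈ Set.Icc (0:ℝ) 1)
    (hS₂ : Continuous S₂) (hbd₂ : ∀ x, S₂ x ∈ Set.Icc (0:ℝ) 1)
    (hd : ∀ x, |S₁ x - S₂ x| ≤ d) (hd0 : 0 ≤ d) (t : ℝ) :
    |Phi f K T S₁ t - Phi f K T S₂ t| ≤ (1 - Real.exp (-(prim f T))) * d := by
  have hβ0 : 0 ≤ prim f T := by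
    have h := prim_le_top hm hnn hL hs 0
    simpa [prim] using h
  have hq1 : Real.exp (-(prim f T)) ≤ 1 := by
    rw [← Real.exp_zero]
    exact Real.exp_le_exp.2 (by linarith)
  rcases lt_or_ge t 0 with h | ht
  · rw [Phi_eq_one_of_nonpos (K := K) hm hnn hL hs hS₁ h.le,
      Phi_eq_one_of_nonpos (K := K) hm hnn hL hs hS₂ h.le]
    simp only [sub_self, abs_zero]
    exact mul_nonneg (by linarith) hd0
  · have hint₁ := (g_integrable (K := K) hm hnn hL hs hS₁ hbd₁).intervalIntegrable (a := 0) (b := t)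
    have hint₂ := (g_integrable (K := K) hm hnn hL hs hS₂ hbd₂).intervalIntegrable (a := 0) (b := t)
    have hfe_int : IntervalIntegrable (fun s => f s * Real.exp (prim f s)) volume 0 t :=
      ((f_integrable hm hnn hL hs).intervalIntegrable).mul_continuousOn
        ((Real.continuous_exp.comp (prim_cont hm hnn hL hs)).continuousOn)
    have hdiff : Phi f K T S₁ t - Phi f K T S₂ t = Real.exp (-(prim f t)) *
        ((∫ s in (0:ℝ)..t, f s * Real.exp (prim f s) * Iop K T S₁ s) -
         (∫ s in (0:ℝ)..t, f s * Real.exp (prim f s) * Iop K T S₂ s)) := by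
      rw [Phi, Phi]; ring
    rw [hdiff, abs_mul, abs_of_nonneg (Real.exp_nonneg _)]
    have hsub : (∫ s in (0:ℝ)..t, f s * Real.exp (prim f s) * Iop K T S₁ s) -
        (∫ s in (0:ℝ)..t, f s * Real.exp (prim f s) * Iop K T S₂ s) =
        ∫ s in (0:ℝ)..t, (f s * Real.exp (prim f s) * Iop K T S₁ s -
          f s * Real.exp (prim f s) * Iop K T S₂ s) :=
      (intervalIntegral.integral_sub hint₁ hint₂).symm
    rw [hsub]
    have habs : |∫ s in (0:ℝ)..t, (f s * Real.exp (prim f s) * Iop K T S₁ s -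
        f s * Real.exp (prim f s) * Iop K T S₂ s)| ≤
        ∫ s in (0:ℝ)..t, |f s * Real.exp (prim f s) * Iop K T S₁ s -
          f s * Real.exp (prim f s) * Iop K T S₂ s| :=
      intervalIntegral.abs_integral_le_integral_abs ht
    have hmono : (∫ s in (0:ℝ)..t, |f s * Real.exp (prim f s) * Iop K T S₁ s -
        f s * Real.exp (prim f s) * Iop K T S₂ s|) ≤
        ∫ s in (0:ℝ)..t, (f s * Real.exp (prim f s)) * d := by
      refine intervalIntegral.integral_mono_on ht ((hint₁.sub hint₂).abs)
        (hfe_int.mul_const d) fun s _ => ?_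
      have h1 : f s * Real.exp (prim f s) * Iop K T S₁ s -
          f s * Real.exp (prim f s) * Iop K T S₂ s =
          (f s * Real.exp (prim f s)) * (Iop K T S₁ s - Iop K T S₂ s) := by ring
      rw [h1, abs_mul, abs_of_nonneg (mul_nonneg (hnn s) (Real.exp_nonneg _))]
      exact mul_le_mul_of_nonneg_left (Iop_dist hS₁ hbd₁ hS₂ hbd₂ hd hd0 s)
        (mul_nonneg (hnn s) (Real.exp_nonneg _))
    have hkey : (∫ s in (0:ℝ)..t, (f s * Real.exp (prim f s)) * d) ≤
        (Real.exp (prim f t) - 1) * d := by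
      rw [intervalIntegral.integral_mul_const]
      exact mul_le_mul_of_nonneg_right
        (key_ineq hm hnn hL (f_integrable hm hnn hL hs) (prim_le_top hm hnn hL hs) ht) hd0
    have hprod : Real.exp (-(prim f t)) * Real.exp (prim f t) = 1 := by
      rw [← Real.exp_add]; simp
    have hmonoexp : Real.exp (-(prim f T)) ≤ Real.exp (-(prim f t)) :=
      Real.exp_le_exp.2 (neg_le_neg (prim_le_top hm hnn hL hs t))
    have hchain := le_trans habs (le_trans hmono hkey)
    have habspos : 0 ≤ |∫ s in (0:ℝ)..t, (f s * Real.exp (prim f s) * Iop K T S₁ s -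
        f s * Real.exp (prim f s) * Iop K T S₂ s)| := abs_nonneg _
    nlinarith [Real.exp_nonneg (-(prim f t))]
end PhiLemmas
end Stmt0Aux

open Stmt0Aux

/-- **Theorem 4.1 (existence of the scale function).**
Let `T > 0`, let `b : [0,∞) → [0,∞)` be measurable and bounded on `[0,T]`, and let `K` be a
weakly continuous Markov kernel from `[0,∞)` to `[0,∞)`. Then there exists a continuous
function `S_T : [0,T] → [0,1]` with `S_T 0 = 1` satisfying the scale equation on `[0,T]`. -/
theorem stmt_0
    (T : ℝ) (hT : 0 < T)
    (b : ℝ → ℝ) (hb_meas : Measurable b) (hb_nonneg : ∀ x, 0 ≤ b x)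
    (hb_bdd : ∃ C : ℝ, ∀ x ∈ Set.Icc (0:ℝ) T, b x ≤ C)
    (K : Kernel ℝ ℝ) [IsMarkovKernel K]
    (hK_supp : ∀ x : ℝ, (K x) (Set.Iio 0) = 0)
    (hK_cont : ∀ f : ℝ → ℝ, Continuous f → (∃ C : ℝ, ∀ y, |f y| ≤ C) →
      Continuous fun x => ∫ y, f y ∂(K x)) :
    ∃ S : ℝ → ℝ,
      ContinuousOn S (Set.Icc 0 T) ∧ S 0 = 1 ∧
      (∀ t ∈ Set.Icc (0:ℝ) T, S t ∈ Set.Icc (0:ℝ) 1) ∧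
      (∀ t ∈ Set.Icc (0:ℝ) T,
        S t = Real.exp (-(∫ u in (0:ℝ)..t, b u)) +
          Real.exp (-(∫ u in (0:ℝ)..t, b u)) *
            ∫ s in (0:ℝ)..t, b s * Real.exp (∫ u in (0:ℝ)..s, b u) *
              (∫ v in Set.Ico (0:ℝ) (T - s), S (s + v) ∂(K s))) := by
  classical
  obtain ⟨C, hC⟩ := hb_bdd
  set L : ℝ := max C 0 with hLdef
  set f : ℝ → ℝ := (Set.Ioc (0:ℝ) T).indicator b with hfdef
  have hm : Measurable f := hb_meas.indicator measurableSet_Ioc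
  have hnn : ∀ x, 0 ≤ f x := by
    intro x
    by_cases hx : x ∈ Set.Ioc (0:ℝ) T
    · rw [hfdef, Set.indicator_of_mem hx]; exact hb_nonneg x
    · rw [hfdef, Set.indicator_of_notMem hx]
  have hLb : ∀ x, f x ≤ L := by
    intro x
    by_cases hx : x ∈ Set.Ioc (0:ℝ) T
    · rw [hfdef, Set.indicator_of_mem hx]
      exact le_trans (hC x ⟨hx.1.le, hx.2⟩) (le_max_left _ _)
    · rw [hfdef, Set.indicator_of_notMem hx]; exact le_max_right _ _
  have hsupp : ∀ x, x ∉ Set.Ioc (0:ℝ) T → f x = 0 := fun x hx =>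
    Set.indicator_of_notMem hx _
  have hcong : ∀ s, 0 ≤ s → s ≤ T → (∫ u in (0:ℝ)..s, b u) = prim f s := by
    intro s h0 h1
    have hbf : ∀ x ∈ Set.uIoc (0:ℝ) s, b x = f x := by
      intro x hx
      rw [Set.uIoc_of_le h0] at hx
      have hxT : x ∈ Set.Ioc (0:ℝ) T := ⟨hx.1, le_trans hx.2 h1⟩
      rw [hfdef, Set.indicator_of_mem hxT]
    exact intervalIntegral.integral_congr_ae (ae_of_all _ hbf)
  -- the complete metric space of candidate functions
  set X : Set (BoundedContinuousFunction ℝ ℝ) :=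
    {g : BoundedContinuousFunction ℝ ℝ | ∀ x, g x ∈ Set.Icc (0:ℝ) 1} with hXdef
  have hXclosed : IsClosed X := by
    have h1 : X = ⋂ x : ℝ, (fun g : BoundedContinuousFunction ℝ ℝ => g x) ⁻¹'
        (Set.Icc (0:ℝ) 1) := by
      ext g; simp [hXdef, Set.mem_iInter]
    rw [h1]
    exact isClosed_iInter fun x =>
      isClosed_Icc.preimage (by exact continuous_eval_const x)
  haveI : CompleteSpace X := hXclosed.completeSpace_coe
  haveI : Nonempty X := ⟨⟨BoundedContinuousFunction.const ℝ (1:ℝ), fun x => by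
    rw [BoundedContinuousFunction.const_apply]
    exact ⟨zero_le_one, le_refl 1⟩⟩⟩
  -- the operator
  have hPhimem : ∀ S : X, ∀ t, Phi f K T (⇑S.1) t ∈ Set.Icc (0:ℝ) 1 := fun S t =>
    Phi_mem hm hnn hLb hsupp S.1.continuous S.2 t
  have hPhicont : ∀ S : X, Continuous (Phi f K T (⇑S.1)) := fun S =>
    Phi_cont hm hnn hLb hsupp S.1.continuous S.2
  set Φ : X → X := fun S =>
    ⟨BoundedContinuousFunction.ofNormedAddCommGroup (Phi f K T (⇑S.1)) (hPhicont S) 1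
      (fun t => by
        rw [Real.norm_eq_abs, abs_le]
        exact ⟨by linarith [(hPhimem S t).1], (hPhimem S t).2⟩),
      fun t => by
        rw [BoundedContinuousFunction.coe_ofNormedAddCommGroup]
        exact hPhimem S t⟩ with hΦdef
  have hΦapp : ∀ (S : X) (t : ℝ), ((Φ S : X) : BoundedContinuousFunction ℝ ℝ) t =
      Phi f K T (⇑S.1) t := fun S t => rfl
  have hβ0 : 0 ≤ prim f T := by
    have h := prim_le_top hm hnn hLb hsupp 0
    simpa [prim] using h
  have hexpβ : Real.exp (-(prim f T)) ≤ 1 := by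
    rw [← Real.exp_zero]
    exact Real.exp_le_exp.2 (by linarith)
  have hcontr : ContractingWith (NNReal.mk (1 - Real.exp (-(prim f T))) (by linarith)) Φ := by
    constructor
    · rw [← NNReal.coe_lt_coe, NNReal.coe_mk, NNReal.coe_one]
      linarith [Real.exp_pos (-(prim f T))]
    · refine LipschitzWith.of_dist_le_mul fun S₁ S₂ => ?_
      rw [Subtype.dist_eq, NNReal.coe_mk]
      refine (BoundedContinuousFunction.dist_le
        (mul_nonneg (by linarith) dist_nonneg)).2 fun t => ?_
      rw [Real.dist_eq, hΦapp, hΦapp]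
      refine Phi_dist hm hnn hLb hsupp S₁.1.continuous S₁.2 S₂.1.continuous S₂.2
        (fun x => ?_) dist_nonneg t
      have h := BoundedContinuousFunction.dist_coe_le_dist
        (f := S₁.1) (g := S₂.1) x
      rwa [Real.dist_eq] at h
  set S₀ : X := hcontr.fixedPoint Φ with hS₀def
  have hfix : Φ S₀ = S₀ := hcontr.fixedPoint_isFixedPt
  have hfixpt : ∀ t, Phi f K T (⇑S₀.1) t = S₀.1 t := by
    intro t
    conv_rhs => rw [← hfix]
    rw [hΦapp]
  refine ⟨fun t => S₀.1 t, S₀.1.continuous.continuousOn, ?_, fun t _ => S₀.2 t, ?_⟩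
  · beta_reduce
    rw [← hfixpt 0, Phi]
    simp [prim]
  · intro t htmem
    beta_reduce
    obtain ⟨ht0, htT⟩ := htmem
    have hinner : (∫ s in (0:ℝ)..t, b s * Real.exp (∫ u in (0:ℝ)..s, b u) *
        (∫ v in Set.Ico (0:ℝ) (T - s), S₀.1 (s + v) ∂(K s))) =
        ∫ s in (0:ℝ)..t, f s * Real.exp (prim f s) * Iop K T (⇑S₀.1) s := by
      refine intervalIntegral.integral_congr_ae (ae_of_all _ fun x hx => ?_)
      rw [Set.uIoc_of_le ht0] at hx
      have hxT : x ∈ Set.Ioc (0:ℝ) T := ⟨hx.1, le_trans hx.2 htT⟩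
      have hfx : f x = b x := by rw [hfdef, Set.indicator_of_mem hxT]
      rw [hcong x hx.1.le (le_trans hx.2 htT), hfx, Iop]
    rw [← hfixpt t, Phi, hcong t ht0 htT, hinner]
end

section
/- Let T > 0, let b : [0,∞) → [0,∞) be measurable and bounded on [0,T], and let K be a Markov kernel from [0,∞) to [0,∞). Define, for continuous S : [0,T] → ℝ, the map (𝒜S)(t) = exp(−∫₀ᵗ b(u)du) + exp(−∫₀ᵗ b(u)du) · ∫₀ᵗ b(s) exp(∫₀ˢ b(u)du) (∫_{[0,T−s)} S(s+v) K(s,dv)) ds, t ∈ [0,T]. Then: (i) if S is continuous with S(0) = 1 and 0 ≤ S(t) ≤ 1 for all t ∈ [0,T], then 𝒜S is continuous with (𝒜S)(0) = 1 and 0 ≤ (𝒜S)(t) ≤ 1 for all t ∈ [0,T]; (ii) for any two continuous functions S₁, S₂ : [0,T] → ℝ, sup_{t∈[0,T]} |(𝒜S₁)(t) − (𝒜S₂)(t)| ≤ sup_{t∈[0,T]} |S₁(t) − S₂(t)|. -/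
open MeasureTheory ProbabilityTheory Filter Topology

/-- The fixed-point map `𝒜` from the proof of Theorem 4.1:
`(𝒜S)(t) = e^{-∫₀ᵗ b} + e^{-∫₀ᵗ b} ∫₀ᵗ b(s) e^{∫₀ˢ b} (∫_{[0,T-s)} S(s+v) K(s,dv)) ds`. -/
noncomputable def scaleMap (T : ℝ) (b : ℝ → ℝ) (K : ProbabilityTheory.Kernel ℝ ℝ)
    (S : ℝ → ℝ) (t : ℝ) : ℝ :=
  Real.exp (-(∫ u in (0:ℝ)..t, b u)) +
    Real.exp (-(∫ u in (0:ℝ)..t, b u)) *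
      ∫ s in (0:ℝ)..t, b s * Real.exp (∫ u in (0:ℝ)..s, b u) *
        (∫ v in Set.Ico (0:ℝ) (T - s), S (s + v) ∂(K s))


section Aux1
open MeasureTheory ProbabilityTheory Filter Topology Set
open scoped ENNReal

lemma exp_step (y d δ : ℝ) (hd : 0 ≤ d) (hdδ : d ≤ δ) :
    Real.exp y * d ≤ Real.exp δ * (Real.exp y - Real.exp (y - d)) := by
  have h1 : d + 1 ≤ Real.exp d := Real.add_one_le_exp d
  have h2 : Real.exp d ≤ Real.exp δ := Real.exp_le_exp.2 hdδ
  have h4 : 0 < Real.exp d := Real.exp_pos d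
  have h5 : 0 < Real.exp y := Real.exp_pos y
  have key : Real.exp d * (Real.exp y - Real.exp (y - d)) = Real.exp y * (Real.exp d - 1) := by
    rw [Real.exp_sub]; field_simp
  have h7 : 0 ≤ Real.exp y - Real.exp (y - d) := by
    have := Real.exp_le_exp.2 (show y - d ≤ y by linarith); linarith
  have h6 : Real.exp y * d ≤ Real.exp y * (Real.exp d - 1) :=
    mul_le_mul_of_nonneg_left (by linarith) h5.le
  calc Real.exp y * d ≤ Real.exp d * (Real.exp y - Real.exp (y - d)) := by rw [key]; exact h6
    _ ≤ Real.exp δ * (Real.exp y - Real.exp (y - d)) := mul_le_mul_of_nonneg_right h2 h7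

lemma meas_inner (T : ℝ) (K : ProbabilityTheory.Kernel ℝ ℝ) [IsSFiniteKernel K] (f : ℝ → ℝ)
    (hf : Continuous f) :
    StronglyMeasurable fun s => ∫ v in Set.Ico (0:ℝ) (T - s), f (s + v) ∂(K s) := by
  have h : ∀ s, (∫ v in Set.Ico (0:ℝ) (T - s), f (s + v) ∂(K s))
      = ∫ v, ({p : ℝ × ℝ | 0 ≤ p.2 ∧ p.2 < T - p.1}.indicator (fun p => f (p.1 + p.2))) (s, v)
          ∂(K s) := by
    intro s
    rw [← integral_indicator measurableSet_Ico]
    exact integral_congr_ae (Eventually.of_forall fun v => by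
      simp [Set.indicator_apply, Set.mem_Ico])
  simp_rw [h]
  apply StronglyMeasurable.integral_kernel_prod_right'
  apply StronglyMeasurable.indicator
  · exact (hf.comp (continuous_fst.add continuous_snd)).stronglyMeasurable
  · have : {p : ℝ × ℝ | 0 ≤ p.2 ∧ p.2 < T - p.1}
        = {p : ℝ × ℝ | 0 ≤ p.2} ∩ {p : ℝ × ℝ | p.2 < T - p.1} := rfl
    rw [this]
    exact (measurableSet_le measurable_const measurable_snd).inter
      (measurableSet_lt measurable_snd (measurable_const.sub measurable_fst))

lemma inner_abs_le (T M : ℝ) (hM0 : 0 ≤ M) (K : ProbabilityTheory.Kernel ℝ ℝ) [IsMarkovKernel K]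
    (f : ℝ → ℝ) (hM : ∀ x, |f x| ≤ M) (s : ℝ) :
    |∫ v in Set.Ico (0:ℝ) (T - s), f (s + v) ∂(K s)| ≤ M := by
  have h := norm_integral_le_of_norm_le_const (μ := (K s).restrict (Set.Ico (0:ℝ) (T - s)))
    (f := fun v => f (s + v)) (C := M) (Eventually.of_forall fun v => by simpa using hM (s + v))
  rw [Real.norm_eq_abs] at h
  refine h.trans ?_
  have h1 : ((K s).restrict (Set.Ico (0:ℝ) (T - s))) Set.univ ≤ 1 := by
    rw [Measure.restrict_apply_univ]
    exact prob_le_one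
  have h2 : (((K s).restrict (Set.Ico (0:ℝ) (T - s))) Set.univ).toReal ≤ 1 := by
    calc (((K s).restrict (Set.Ico (0:ℝ) (T - s))) Set.univ).toReal
        ≤ (1 : ℝ≥0∞).toReal := ENNReal.toReal_mono ENNReal.one_ne_top h1
      _ = 1 := ENNReal.toReal_one
  exact mul_le_of_le_one_right hM0 h2

end Aux1

section Blemmas

open MeasureTheory Filter Topology Set intervalIntegral

variable {T C : ℝ} {b : ℝ → ℝ}

lemma b_integrableOn (hT : 0 ≤ T) (hb_meas : Measurable b) (hb0 : ∀ x, 0 ≤ b x)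
    (hC : ∀ x ∈ Set.Icc (0:ℝ) T, b x ≤ C) : IntegrableOn b (Set.Icc 0 T) := by
  refine Integrable.mono' (integrable_const C) hb_meas.aestronglyMeasurable.restrict ?_
  filter_upwards [ae_restrict_mem measurableSet_Icc] with x hx
  rw [Real.norm_eq_abs, abs_of_nonneg (hb0 x)]
  exact hC x hx

lemma b_ii (hT : 0 ≤ T) (hb_meas : Measurable b) (hb0 : ∀ x, 0 ≤ b x)
    (hC : ∀ x ∈ Set.Icc (0:ℝ) T, b x ≤ C) {x y : ℝ} (hx : x ∈ Set.Icc (0:ℝ) T)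
    (hy : y ∈ Set.Icc (0:ℝ) T) : IntervalIntegrable b volume x y := by
  refine IntegrableOn.intervalIntegrable ((b_integrableOn hT hb_meas hb0 hC).mono_set ?_)
  rw [show Set.Icc (0:ℝ) T = Set.uIcc 0 T from (uIcc_of_le hT).symm]
  exact uIcc_subset_uIcc (by rwa [uIcc_of_le hT]) (by rwa [uIcc_of_le hT])

lemma B_sub (hT : 0 ≤ T) (hb_meas : Measurable b) (hb0 : ∀ x, 0 ≤ b x)
    (hC : ∀ x ∈ Set.Icc (0:ℝ) T, b x ≤ C) {x y : ℝ} (hx : x ∈ Set.Icc (0:ℝ) T)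
    (hy : y ∈ Set.Icc (0:ℝ) T) :
    (∫ u in (0:ℝ)..y, b u) - ∫ u in (0:ℝ)..x, b u = ∫ u in x..y, b u :=
  intervalIntegral.integral_interval_sub_left
    (b_ii hT hb_meas hb0 hC (Set.left_mem_Icc.2 hT) hy)
    (b_ii hT hb_meas hb0 hC (Set.left_mem_Icc.2 hT) hx)

lemma B_mono (hT : 0 ≤ T) (hb_meas : Measurable b) (hb0 : ∀ x, 0 ≤ b x)
    (hC : ∀ x ∈ Set.Icc (0:ℝ) T, b x ≤ C) :
    MonotoneOn (fun t => ∫ u in (0:ℝ)..t, b u) (Set.Icc 0 T) := by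
  intro x hx y hy hxy
  have h := B_sub hT hb_meas hb0 hC hx hy
  have h2 : 0 ≤ ∫ u in x..y, b u :=
    intervalIntegral.integral_nonneg hxy fun u _ => hb0 u
  simp only
  linarith

lemma B_cont (hT : 0 ≤ T) (hb_meas : Measurable b) (hb0 : ∀ x, 0 ≤ b x)
    (hC : ∀ x ∈ Set.Icc (0:ℝ) T, b x ≤ C) :
    ContinuousOn (fun t => ∫ u in (0:ℝ)..t, b u) (Set.Icc 0 T) := by
  rw [show Set.Icc (0:ℝ) T = Set.uIcc 0 T from (uIcc_of_le hT).symm]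
  exact intervalIntegral.continuousOn_primitive_interval
    (by rw [uIcc_of_le hT]; exact b_integrableOn hT hb_meas hb0 hC)

lemma B_le (hT : 0 ≤ T) (hb_meas : Measurable b) (hb0 : ∀ x, 0 ≤ b x)
    (hC : ∀ x ∈ Set.Icc (0:ℝ) T, b x ≤ C) {x : ℝ} (hx : x ∈ Set.Icc (0:ℝ) T) :
    (∫ u in (0:ℝ)..x, b u) ∈ Set.Icc 0 (C * T) := by
  have hC0 : 0 ≤ C := le_trans (hb0 0) (hC 0 (Set.left_mem_Icc.2 hT))
  constructor
  · exact intervalIntegral.integral_nonneg hx.1 fun u _ => hb0 u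
  · have h1 : (∫ u in (0:ℝ)..x, b u) ≤ ∫ _ in (0:ℝ)..x, C := by
      refine intervalIntegral.integral_mono_on hx.1
        (b_ii hT hb_meas hb0 hC (Set.left_mem_Icc.2 hT) hx) intervalIntegrable_const ?_
      intro u hu
      exact hC u ⟨hu.1, hu.2.trans hx.2⟩
    rw [intervalIntegral.integral_const, smul_eq_mul, sub_zero] at h1
    calc (∫ u in (0:ℝ)..x, b u) ≤ x * C := h1
      _ ≤ T * C := mul_le_mul_of_nonneg_right hx.2 hC0
      _ = C * T := mul_comm _ _

lemma be_integrableOn (hT : 0 ≤ T) (hb_meas : Measurable b) (hb0 : ∀ x, 0 ≤ b x)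
    (hC : ∀ x ∈ Set.Icc (0:ℝ) T, b x ≤ C) :
    IntegrableOn (fun s => b s * Real.exp (∫ u in (0:ℝ)..s, b u)) (Set.Icc 0 T) := by
  have hC0 : 0 ≤ C := le_trans (hb0 0) (hC 0 (Set.left_mem_Icc.2 hT))
  refine Integrable.mono' (integrable_const (C * Real.exp (C * T)))
    (hb_meas.aestronglyMeasurable.restrict.mul
      ((Real.continuous_exp.comp_continuousOn (B_cont hT hb_meas hb0 hC)).aestronglyMeasurable
        measurableSet_Icc)) ?_
  filter_upwards [ae_restrict_mem measurableSet_Icc] with x hx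
  have hB := B_le hT hb_meas hb0 hC hx
  rw [Real.norm_eq_abs, abs_of_nonneg (mul_nonneg (hb0 x) (Real.exp_pos _).le)]
  exact mul_le_mul (hC x hx) (Real.exp_le_exp.2 hB.2) (Real.exp_pos _).le hC0

end Blemmas

section Dlemma

open MeasureTheory Filter Topology Set intervalIntegral

variable {T C : ℝ} {b : ℝ → ℝ}

lemma be_intervalIntegrable (hT : 0 ≤ T) (hb_meas : Measurable b) (hb0 : ∀ x, 0 ≤ b x)
    (hC : ∀ x ∈ Set.Icc (0:ℝ) T, b x ≤ C) {x y : ℝ} (hx : x ∈ Set.Icc (0:ℝ) T)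
    (hy : y ∈ Set.Icc (0:ℝ) T) :
    IntervalIntegrable (fun s => b s * Real.exp (∫ u in (0:ℝ)..s, b u)) volume x y := by
  refine IntegrableOn.intervalIntegrable ((be_integrableOn hT hb_meas hb0 hC).mono_set ?_)
  rw [show Set.Icc (0:ℝ) T = Set.uIcc 0 T from (uIcc_of_le hT).symm]
  exact uIcc_subset_uIcc (by rwa [uIcc_of_le hT]) (by rwa [uIcc_of_le hT])

lemma keyFTC (hT : 0 ≤ T) (hb_meas : Measurable b) (hb0 : ∀ x, 0 ≤ b x)
    (hC : ∀ x ∈ Set.Icc (0:ℝ) T, b x ≤ C) {t : ℝ} (ht : t ∈ Set.Icc (0:ℝ) T) :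
    (∫ s in (0:ℝ)..t, b s * Real.exp (∫ u in (0:ℝ)..s, b u))
      ≤ Real.exp (∫ u in (0:ℝ)..t, b u) - 1 := by
  obtain ⟨ht0, htT⟩ := ht
  set B : ℝ → ℝ := fun x => ∫ u in (0:ℝ)..x, b u with hBdef
  have hB0 : B 0 = 0 := intervalIntegral.integral_same
  have hkey : ∀ n : ℕ, (∫ s in (0:ℝ)..t, b s * Real.exp (B s))
      ≤ Real.exp (C * t / (n + 1)) * (Real.exp (B t) - 1) := by
    intro n
    set a : ℕ → ℝ := fun i => i * (t / (n + 1)) with ha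
    have htn : 0 ≤ t / (n + 1) := div_nonneg ht0 (by positivity)
    have hstep : ∀ i : ℕ, a (i + 1) - a i = t / (n + 1) := by
      intro i; simp only [ha]; push_cast; ring
    have hle : ∀ i : ℕ, a i ≤ a (i + 1) := fun i => by
      have := hstep i; linarith
    have hmem : ∀ i : ℕ, i ≤ n + 1 → a i ∈ Set.Icc (0:ℝ) T := by
      intro i hi
      constructor
      · exact mul_nonneg (Nat.cast_nonneg i) htn
      · have h1 : (i : ℝ) ≤ (n : ℝ) + 1 := by exact_mod_cast hi
        have h2 : ((n:ℝ) + 1) * (t / (n + 1)) = t := by field_simp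
        calc a i = (i:ℝ) * (t / (n+1)) := rfl
          _ ≤ ((n:ℝ) + 1) * (t / (n + 1)) := mul_le_mul_of_nonneg_right h1 htn
          _ = t := h2
          _ ≤ T := htT

    have han : a (n + 1) = t := by
      simp only [ha]; push_cast; field_simp
    have ha0 : a 0 = 0 := by simp [ha]
    -- per-piece bound
    have piece : ∀ i : ℕ, i < n + 1 →
        (∫ s in a i..a (i + 1), b s * Real.exp (B s))
          ≤ Real.exp (C * t / (n + 1)) * (Real.exp (B (a (i + 1))) - Real.exp (B (a i))) := by
      intro i hi
      have hmi : a i ∈ Set.Icc (0:ℝ) T := hmem i (le_of_lt hi)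
      have hmi1 : a (i + 1) ∈ Set.Icc (0:ℝ) T := hmem (i + 1) hi
      have hd0 : 0 ≤ B (a (i + 1)) - B (a i) := by
        have := B_mono hT hb_meas hb0 hC hmi hmi1 (hle i)
        simpa [hBdef] using this
      have hdd : B (a (i + 1)) - B (a i) ≤ C * t / (n + 1) := by
        have h1 : B (a (i + 1)) - B (a i) = ∫ u in a i..a (i + 1), b u :=
          B_sub hT hb_meas hb0 hC hmi hmi1
        have h2 : (∫ u in a i..a (i + 1), b u) ≤ ∫ _ in a i..a (i + 1), C := by
          refine intervalIntegral.integral_mono_on (hle i)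
            (b_ii hT hb_meas hb0 hC hmi hmi1) intervalIntegrable_const ?_
          intro u hu
          exact hC u ⟨le_trans hmi.1 hu.1, le_trans hu.2 hmi1.2⟩
        rw [intervalIntegral.integral_const, smul_eq_mul, hstep i] at h2
        rw [h1]
        calc (∫ u in a i..a (i + 1), b u) ≤ t / (n + 1) * C := h2
          _ = C * t / (n + 1) := by ring
      have step1 : (∫ s in a i..a (i + 1), b s * Real.exp (B s))
          ≤ ∫ s in a i..a (i + 1), b s * Real.exp (B (a (i + 1))) := by
        refine intervalIntegral.integral_mono_on (hle i)
          (be_intervalIntegrable hT hb_meas hb0 hC hmi hmi1)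
          ((b_ii hT hb_meas hb0 hC hmi hmi1).mul_const _) ?_
        intro s hs
        have hsm : s ∈ Set.Icc (0:ℝ) T := ⟨le_trans hmi.1 hs.1, le_trans hs.2 hmi1.2⟩
        have : B s ≤ B (a (i + 1)) := B_mono hT hb_meas hb0 hC hsm hmi1 hs.2
        exact mul_le_mul_of_nonneg_left (Real.exp_le_exp.2 this) (hb0 s)
      have step2 : (∫ s in a i..a (i + 1), b s * Real.exp (B (a (i + 1))))
          = Real.exp (B (a (i + 1))) * (B (a (i + 1)) - B (a i)) := by
        rw [intervalIntegral.integral_mul_const,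
          B_sub hT hb_meas hb0 hC hmi hmi1]
        ring
      have step3 := exp_step (B (a (i + 1))) (B (a (i + 1)) - B (a i)) (C * t / (n + 1)) hd0 hdd
      have step4 : B (a (i + 1)) - (B (a (i + 1)) - B (a i)) = B (a i) := by ring
      rw [step4] at step3
      calc (∫ s in a i..a (i + 1), b s * Real.exp (B s))
          ≤ Real.exp (B (a (i + 1))) * (B (a (i + 1)) - B (a i)) := step2 ▸ step1
        _ ≤ Real.exp (C * t / (n + 1)) * (Real.exp (B (a (i + 1))) - Real.exp (B (a i))) := step3
    -- sum up
    have hsum : (∫ s in (0:ℝ)..t, b s * Real.exp (B s))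
        = ∑ i ∈ Finset.range (n + 1), ∫ s in a i..a (i + 1), b s * Real.exp (B s) := by
      rw [intervalIntegral.sum_integral_adjacent_intervals (fun k hk =>
        be_intervalIntegrable hT hb_meas hb0 hC (hmem k (le_of_lt hk)) (hmem (k + 1) hk))]
      rw [ha0, han]
    rw [hsum]
    calc (∑ i ∈ Finset.range (n + 1), ∫ s in a i..a (i + 1), b s * Real.exp (B s))
        ≤ ∑ i ∈ Finset.range (n + 1),
            Real.exp (C * t / (n + 1)) * (Real.exp (B (a (i + 1))) - Real.exp (B (a i))) :=
          Finset.sum_le_sum fun i hi => piece i (Finset.mem_range.1 hi)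
      _ = Real.exp (C * t / (n + 1)) *
            ∑ i ∈ Finset.range (n + 1), (Real.exp (B (a (i + 1))) - Real.exp (B (a i))) := by
          rw [Finset.mul_sum]
      _ = Real.exp (C * t / (n + 1)) * (Real.exp (B t) - 1) := by
          rw [Finset.sum_range_sub (fun i => Real.exp (B (a i))), han, ha0, hB0, Real.exp_zero]
  -- take the limit n → ∞
  have hlim : Tendsto (fun n : ℕ => Real.exp (C * t / (n + 1)) * (Real.exp (B t) - 1))
      atTop (𝓝 (Real.exp (B t) - 1)) := by
    have h1 : Tendsto (fun n : ℕ => C * t / (n + 1)) atTop (𝓝 0) := by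
      have := tendsto_one_div_add_atTop_nhds_zero_nat.const_mul (C * t)
      rw [mul_zero] at this
      refine this.congr fun n => ?_
      rw [mul_one_div]
    have h2 : Tendsto (fun n : ℕ => Real.exp (C * t / (n + 1))) atTop (𝓝 1) := by
      have := (Real.continuous_exp.tendsto 0).comp h1
      rwa [Real.exp_zero] at this
    have := h2.mul_const (Real.exp (B t) - 1)
    rwa [one_mul] at this
  exact ge_of_tendsto' hlim hkey

end Dlemma

section Main

open MeasureTheory ProbabilityTheory Filter Topology Set intervalIntegral

variable {T C : ℝ} {b : ℝ → ℝ}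

lemma gI_integrableOn (hT : 0 ≤ T) (hb_meas : Measurable b) (hb0 : ∀ x, 0 ≤ b x)
    (hC : ∀ x ∈ Set.Icc (0:ℝ) T, b x ≤ C) {I : ℝ → ℝ} (hI : StronglyMeasurable I)
    {M : ℝ} (hIb : ∀ s, |I s| ≤ M) :
    IntegrableOn (fun s => b s * Real.exp (∫ u in (0:ℝ)..s, b u) * I s) (Set.Icc 0 T) := by
  have hC0 : 0 ≤ C := le_trans (hb0 0) (hC 0 (Set.left_mem_Icc.2 hT))
  have hM0 : 0 ≤ M := le_trans (abs_nonneg _) (hIb 0)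
  refine Integrable.mono' (integrable_const (C * Real.exp (C * T) * M))
    ((hb_meas.aestronglyMeasurable.restrict.mul
      ((Real.continuous_exp.comp_continuousOn (B_cont hT hb_meas hb0 hC)).aestronglyMeasurable
        measurableSet_Icc)).mul hI.aestronglyMeasurable.restrict) ?_
  filter_upwards [ae_restrict_mem measurableSet_Icc] with x hx
  have hB := B_le hT hb_meas hb0 hC hx
  have hbe : 0 ≤ b x * Real.exp (∫ u in (0:ℝ)..x, b u) :=
    mul_nonneg (hb0 x) (Real.exp_pos _).le
  rw [Real.norm_eq_abs, abs_mul]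
  have h1 : |b x * Real.exp (∫ u in (0:ℝ)..x, b u)| ≤ C * Real.exp (C * T) := by
    rw [abs_of_nonneg hbe]
    exact mul_le_mul (hC x hx) (Real.exp_le_exp.2 hB.2) (Real.exp_pos _).le hC0
  exact mul_le_mul h1 (hIb x) (abs_nonneg _) (by positivity)

lemma gI_intervalIntegrable (hT : 0 ≤ T) (hb_meas : Measurable b) (hb0 : ∀ x, 0 ≤ b x)
    (hC : ∀ x ∈ Set.Icc (0:ℝ) T, b x ≤ C) {I : ℝ → ℝ} (hI : StronglyMeasurable I)
    {M : ℝ} (hIb : ∀ s, |I s| ≤ M) {x y : ℝ} (hx : x ∈ Set.Icc (0:ℝ) T)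
    (hy : y ∈ Set.Icc (0:ℝ) T) :
    IntervalIntegrable (fun s => b s * Real.exp (∫ u in (0:ℝ)..s, b u) * I s) volume x y := by
  refine IntegrableOn.intervalIntegrable ((gI_integrableOn hT hb_meas hb0 hC hI hIb).mono_set ?_)
  rw [show Set.Icc (0:ℝ) T = Set.uIcc 0 T from (uIcc_of_le hT).symm]
  exact uIcc_subset_uIcc (by rwa [uIcc_of_le hT]) (by rwa [uIcc_of_le hT])

/-- Core of part (i), for globally continuous `f` with values in `[0,1]`. -/
lemma part_one_core (hT : 0 ≤ T) (hb_meas : Measurable b) (hb0 : ∀ x, 0 ≤ b x)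
    (hC : ∀ x ∈ Set.Icc (0:ℝ) T, b x ≤ C)
    (K : ProbabilityTheory.Kernel ℝ ℝ) [IsMarkovKernel K]
    (f : ℝ → ℝ) (hf : Continuous f) (hf01 : ∀ x, f x ∈ Set.Icc (0:ℝ) 1) :
    ContinuousOn (scaleMap T b K f) (Set.Icc 0 T) ∧
      ∀ t ∈ Set.Icc (0:ℝ) T, scaleMap T b K f t ∈ Set.Icc (0:ℝ) 1 := by
  set I : ℝ → ℝ := fun s => ∫ v in Set.Ico (0:ℝ) (T - s), f (s + v) ∂(K s) with hIdef
  have hI_meas : StronglyMeasurable I := meas_inner T K f hf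
  have hI_abs : ∀ s, |I s| ≤ 1 := fun s => inner_abs_le T 1 zero_le_one K f
    (fun x => abs_le.2 ⟨by linarith [(hf01 x).1], (hf01 x).2⟩) s
  have hI_nonneg : ∀ s, 0 ≤ I s := fun s =>
    setIntegral_nonneg measurableSet_Ico fun v _ => (hf01 _).1
  have hI_le_one : ∀ s, I s ≤ 1 := fun s => le_trans (le_abs_self _) (hI_abs s)
  set g : ℝ → ℝ := fun s => b s * Real.exp (∫ u in (0:ℝ)..s, b u) * I s with hgdef
  have hrep : ∀ t, scaleMap T b K f t = Real.exp (-(∫ u in (0:ℝ)..t, b u)) +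
      Real.exp (-(∫ u in (0:ℝ)..t, b u)) * ∫ s in (0:ℝ)..t, g s := fun t => rfl
  have hg_int : IntegrableOn g (Set.Icc 0 T) :=
    gI_integrableOn hT hb_meas hb0 hC hI_meas hI_abs
  have hexp : ContinuousOn (fun t => Real.exp (-(∫ u in (0:ℝ)..t, b u))) (Set.Icc (0:ℝ) T) :=
    Real.continuous_exp.comp_continuousOn (B_cont hT hb_meas hb0 hC).neg
  have hprim : ContinuousOn (fun t => ∫ s in (0:ℝ)..t, g s) (Set.Icc (0:ℝ) T) := by
    rw [show Set.Icc (0:ℝ) T = Set.uIcc 0 T from (uIcc_of_le hT).symm]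
    exact intervalIntegral.continuousOn_primitive_interval
      (by rw [uIcc_of_le hT]; exact hg_int)
  constructor
  · exact ((hexp.add (hexp.mul hprim)).congr fun t htt => hrep t)
  · intro t htt
    rw [hrep t]
    have hint_nonneg : 0 ≤ ∫ s in (0:ℝ)..t, g s :=
      intervalIntegral.integral_nonneg htt.1 fun s _ =>
        mul_nonneg (mul_nonneg (hb0 s) (Real.exp_pos _).le) (hI_nonneg s)
    have h1 : (∫ s in (0:ℝ)..t, g s)
        ≤ ∫ s in (0:ℝ)..t, b s * Real.exp (∫ u in (0:ℝ)..s, b u) := by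
      refine intervalIntegral.integral_mono_on htt.1
        (gI_intervalIntegrable hT hb_meas hb0 hC hI_meas hI_abs (Set.left_mem_Icc.2 hT) htt)
        (be_intervalIntegrable hT hb_meas hb0 hC (Set.left_mem_Icc.2 hT) htt) ?_
      intro s hs
      exact mul_le_of_le_one_right (mul_nonneg (hb0 s) (Real.exp_pos _).le) (hI_le_one s)
    have h2 := keyFTC hT hb_meas hb0 hC htt
    have h3 : Real.exp (-(∫ u in (0:ℝ)..t, b u)) * Real.exp (∫ u in (0:ℝ)..t, b u) = 1 := by
      rw [← Real.exp_add]; simp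
    constructor
    · exact add_nonneg (Real.exp_pos _).le (mul_nonneg (Real.exp_pos _).le hint_nonneg)
    · have h4 : Real.exp (-(∫ u in (0:ℝ)..t, b u)) * (∫ s in (0:ℝ)..t, g s)
          ≤ Real.exp (-(∫ u in (0:ℝ)..t, b u)) * (Real.exp (∫ u in (0:ℝ)..t, b u) - 1) :=
        mul_le_mul_of_nonneg_left (h1.trans h2) (Real.exp_pos _).le
      have h5 : Real.exp (-(∫ u in (0:ℝ)..t, b u)) * (Real.exp (∫ u in (0:ℝ)..t, b u) - 1)
          = 1 - Real.exp (-(∫ u in (0:ℝ)..t, b u)) := by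
        rw [mul_sub, h3]; ring
      have h6 : (0:ℝ) < Real.exp (-(∫ u in (0:ℝ)..t, b u)) := Real.exp_pos _
      linarith

/-- Core of part (ii), for globally continuous bounded `f₁ f₂`. -/
lemma part_two_core (hT : 0 ≤ T) (hb_meas : Measurable b) (hb0 : ∀ x, 0 ≤ b x)
    (hC : ∀ x ∈ Set.Icc (0:ℝ) T, b x ≤ C)
    (K : ProbabilityTheory.Kernel ℝ ℝ) [IsMarkovKernel K]
    (f₁ f₂ : ℝ → ℝ) (hf₁ : Continuous f₁) (hf₂ : Continuous f₂)
    {C₁ C₂ M : ℝ} (hC₁ : ∀ x, |f₁ x| ≤ C₁) (hC₂ : ∀ x, |f₂ x| ≤ C₂)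
    (hM0 : 0 ≤ M) (hM : ∀ x, |f₁ x - f₂ x| ≤ M)
    {t : ℝ} (ht : t ∈ Set.Icc (0:ℝ) T) :
    |scaleMap T b K f₁ t - scaleMap T b K f₂ t| ≤ M := by
  set I₁ : ℝ → ℝ := fun s => ∫ v in Set.Ico (0:ℝ) (T - s), f₁ (s + v) ∂(K s) with hI₁def
  set I₂ : ℝ → ℝ := fun s => ∫ v in Set.Ico (0:ℝ) (T - s), f₂ (s + v) ∂(K s) with hI₂def
  have hI₁_meas : StronglyMeasurable I₁ := meas_inner T K f₁ hf₁
  have hI₂_meas : StronglyMeasurable I₂ := meas_inner T K f₂ hf₂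
  have hC₁0 : 0 ≤ C₁ := le_trans (abs_nonneg _) (hC₁ 0)
  have hC₂0 : 0 ≤ C₂ := le_trans (abs_nonneg _) (hC₂ 0)
  have hI₁_abs : ∀ s, |I₁ s| ≤ C₁ := fun s => inner_abs_le T C₁ hC₁0 K f₁ hC₁ s
  have hI₂_abs : ∀ s, |I₂ s| ≤ C₂ := fun s => inner_abs_le T C₂ hC₂0 K f₂ hC₂ s
  have hint : ∀ (f : ℝ → ℝ) (Cf : ℝ), Continuous f → (∀ x, |f x| ≤ Cf) → ∀ s : ℝ,
      Integrable (fun v => f (s + v)) ((K s).restrict (Set.Ico (0:ℝ) (T - s))) := by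
    intro f Cf hfc hfb s
    refine Integrable.mono' (integrable_const Cf)
      ((hfc.comp (continuous_const.add continuous_id)).aestronglyMeasurable) ?_
    exact Eventually.of_forall fun v => by simpa [Real.norm_eq_abs] using hfb (s + v)
  have hIdiff : ∀ s, |I₁ s - I₂ s| ≤ M := by
    intro s
    have hsub : I₁ s - I₂ s = ∫ v in Set.Ico (0:ℝ) (T - s), (f₁ (s + v) - f₂ (s + v)) ∂(K s) :=
      (integral_sub (hint f₁ C₁ hf₁ hC₁ s) (hint f₂ C₂ hf₂ hC₂ s)).symm
    rw [hsub]
    exact inner_abs_le T M hM0 K (fun x => f₁ x - f₂ x) hM s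
  set g₁ : ℝ → ℝ := fun s => b s * Real.exp (∫ u in (0:ℝ)..s, b u) * I₁ s with hg₁def
  set g₂ : ℝ → ℝ := fun s => b s * Real.exp (∫ u in (0:ℝ)..s, b u) * I₂ s with hg₂def
  have hrep₁ : scaleMap T b K f₁ t = Real.exp (-(∫ u in (0:ℝ)..t, b u)) +
      Real.exp (-(∫ u in (0:ℝ)..t, b u)) * ∫ s in (0:ℝ)..t, g₁ s := rfl
  have hrep₂ : scaleMap T b K f₂ t = Real.exp (-(∫ u in (0:ℝ)..t, b u)) +
      Real.exp (-(∫ u in (0:ℝ)..t, b u)) * ∫ s in (0:ℝ)..t, g₂ s := rfl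
  have hii₁ : IntervalIntegrable g₁ volume 0 t :=
    gI_intervalIntegrable hT hb_meas hb0 hC hI₁_meas hI₁_abs (Set.left_mem_Icc.2 hT) ht
  have hii₂ : IntervalIntegrable g₂ volume 0 t :=
    gI_intervalIntegrable hT hb_meas hb0 hC hI₂_meas hI₂_abs (Set.left_mem_Icc.2 hT) ht
  rw [hrep₁, hrep₂]
  have heq : Real.exp (-(∫ u in (0:ℝ)..t, b u)) +
      Real.exp (-(∫ u in (0:ℝ)..t, b u)) * (∫ s in (0:ℝ)..t, g₁ s) -
      (Real.exp (-(∫ u in (0:ℝ)..t, b u)) +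
      Real.exp (-(∫ u in (0:ℝ)..t, b u)) * ∫ s in (0:ℝ)..t, g₂ s)
      = Real.exp (-(∫ u in (0:ℝ)..t, b u)) *
        ((∫ s in (0:ℝ)..t, g₁ s) - ∫ s in (0:ℝ)..t, g₂ s) := by ring
  rw [heq, abs_mul, abs_of_nonneg (Real.exp_pos _).le]
  have hsub : (∫ s in (0:ℝ)..t, g₁ s) - ∫ s in (0:ℝ)..t, g₂ s
      = ∫ s in (0:ℝ)..t, (g₁ s - g₂ s) := (intervalIntegral.integral_sub hii₁ hii₂).symm
  rw [hsub]
  have habs : |∫ s in (0:ℝ)..t, (g₁ s - g₂ s)| ≤ ∫ s in (0:ℝ)..t, |g₁ s - g₂ s| :=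
    intervalIntegral.abs_integral_le_integral_abs ht.1
  have hmono : (∫ s in (0:ℝ)..t, |g₁ s - g₂ s|)
      ≤ ∫ s in (0:ℝ)..t, b s * Real.exp (∫ u in (0:ℝ)..s, b u) * M := by
    refine intervalIntegral.integral_mono_on ht.1 (hii₁.sub hii₂).abs
      ((be_intervalIntegrable hT hb_meas hb0 hC (Set.left_mem_Icc.2 hT) ht).mul_const M) ?_
    intro s hs
    have h5 : g₁ s - g₂ s = b s * Real.exp (∫ u in (0:ℝ)..s, b u) * (I₁ s - I₂ s) := by
      simp only [hg₁def, hg₂def]; ring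
    rw [h5, abs_mul, abs_of_nonneg (mul_nonneg (hb0 s) (Real.exp_pos _).le)]
    exact mul_le_mul_of_nonneg_left (hIdiff s) (mul_nonneg (hb0 s) (Real.exp_pos _).le)
  have hFTC : (∫ s in (0:ℝ)..t, b s * Real.exp (∫ u in (0:ℝ)..s, b u) * M)
      ≤ (Real.exp (∫ u in (0:ℝ)..t, b u) - 1) * M := by
    rw [intervalIntegral.integral_mul_const]
    exact mul_le_mul_of_nonneg_right (keyFTC hT hb_meas hb0 hC ht) hM0
  have h3 : Real.exp (-(∫ u in (0:ℝ)..t, b u)) * Real.exp (∫ u in (0:ℝ)..t, b u) = 1 := by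
    rw [← Real.exp_add]; simp
  have h6 : (0:ℝ) < Real.exp (-(∫ u in (0:ℝ)..t, b u)) := Real.exp_pos _
  have h7 : Real.exp (-(∫ u in (0:ℝ)..t, b u)) * |∫ s in (0:ℝ)..t, (g₁ s - g₂ s)|
      ≤ Real.exp (-(∫ u in (0:ℝ)..t, b u)) * ((Real.exp (∫ u in (0:ℝ)..t, b u) - 1) * M) :=
    mul_le_mul_of_nonneg_left (habs.trans (hmono.trans hFTC)) h6.le
  have h8 : Real.exp (-(∫ u in (0:ℝ)..t, b u)) * ((Real.exp (∫ u in (0:ℝ)..t, b u) - 1) * M)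
      = M - Real.exp (-(∫ u in (0:ℝ)..t, b u)) * M := by
    rw [show Real.exp (-(∫ u in (0:ℝ)..t, b u)) * ((Real.exp (∫ u in (0:ℝ)..t, b u) - 1) * M)
      = (Real.exp (-(∫ u in (0:ℝ)..t, b u)) * Real.exp (∫ u in (0:ℝ)..t, b u)) * M
        - Real.exp (-(∫ u in (0:ℝ)..t, b u)) * M from by ring, h3]
    ring
  rw [h8] at h7
  nlinarith

end Main

section Glue

open MeasureTheory ProbabilityTheory Filter Topology Set intervalIntegral

variable {T : ℝ} {b : ℝ → ℝ}

lemma scaleMap_congr (hT : 0 ≤ T) (K : ProbabilityTheory.Kernel ℝ ℝ) (S St : ℝ → ℝ)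
    (h : ∀ x ∈ Set.Icc (0:ℝ) T, S x = St x) {t : ℝ} (ht : t ∈ Set.Icc (0:ℝ) T) :
    scaleMap T b K S t = scaleMap T b K St t := by
  unfold scaleMap
  congr 1
  congr 1
  refine intervalIntegral.integral_congr fun s hs => ?_
  rw [uIcc_of_le ht.1] at hs
  congr 1
  refine setIntegral_congr_fun measurableSet_Ico fun v hv => ?_
  have hmem : s + v ∈ Set.Icc (0:ℝ) T := ⟨add_nonneg hs.1 hv.1, by
    have := hv.2; simp only [Set.mem_Icc] at *; linarith⟩
  exact h _ hmem

end Glue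

/-- **Invariance and nonexpansiveness of the fixed-point map `𝒜`** (key step of Theorem 4.1):
(i) `𝒜` preserves the set of continuous `S : [0,T] → [0,1]` with `S 0 = 1`;
(ii) `𝒜` is nonexpansive for the supremum norm on `[0,T]`. -/
theorem stmt_1
    (T : ℝ) (hT : 0 < T)
    (b : ℝ → ℝ) (hb_meas : Measurable b) (hb_nonneg : ∀ x, 0 ≤ b x)
    (hb_bdd : ∃ C : ℝ, ∀ x ∈ Set.Icc (0:ℝ) T, b x ≤ C)
    (K : Kernel ℝ ℝ) [IsMarkovKernel K]
    (hK_supp : ∀ x : ℝ, (K x) (Set.Iio 0) = 0) :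
    (∀ S : ℝ → ℝ, ContinuousOn S (Set.Icc 0 T) → S 0 = 1 →
      (∀ t ∈ Set.Icc (0:ℝ) T, S t ∈ Set.Icc (0:ℝ) 1) →
      ContinuousOn (scaleMap T b K S) (Set.Icc 0 T) ∧ scaleMap T b K S 0 = 1 ∧
        ∀ t ∈ Set.Icc (0:ℝ) T, scaleMap T b K S t ∈ Set.Icc (0:ℝ) 1) ∧
    (∀ S₁ S₂ : ℝ → ℝ, ContinuousOn S₁ (Set.Icc 0 T) → ContinuousOn S₂ (Set.Icc 0 T) →
      ⨆ t : Set.Icc (0:ℝ) T, |scaleMap T b K S₁ ↑t - scaleMap T b K S₂ ↑t| ≤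
        ⨆ t : Set.Icc (0:ℝ) T, |S₁ ↑t - S₂ ↑t|) := by
  obtain ⟨C, hC⟩ := hb_bdd
  have hT' : (0:ℝ) ≤ T := hT.le
  have hcl_cont : Continuous (fun x : ℝ => max 0 (min x T)) :=
    continuous_const.max (continuous_id.min continuous_const)
  have hcl_mem : ∀ x : ℝ, max 0 (min x T) ∈ Set.Icc (0:ℝ) T := fun x =>
    ⟨le_max_left _ _, max_le hT' (min_le_right _ _)⟩
  have hcl_id : ∀ x ∈ Set.Icc (0:ℝ) T, max 0 (min x T) = x := fun x hx => by
    rw [min_eq_left hx.2, max_eq_right hx.1]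
  constructor
  · intro S hS hS0 hS01
    set St : ℝ → ℝ := fun x => S (max 0 (min x T)) with hStdef
    have hSt_cont : Continuous St := hS.comp_continuous hcl_cont hcl_mem
    have hSt01 : ∀ x, St x ∈ Set.Icc (0:ℝ) 1 := fun x => hS01 _ (hcl_mem x)
    have hagree : ∀ x ∈ Set.Icc (0:ℝ) T, S x = St x := fun x hx => by
      simp only [hStdef]; rw [hcl_id x hx]
    have hcore := part_one_core hT' hb_meas hb_nonneg hC K St hSt_cont hSt01
    refine ⟨?_, ?_, ?_⟩
    · exact hcore.1.congr fun t htt => scaleMap_congr hT' K S St hagree htt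
    · simp [scaleMap, intervalIntegral.integral_same]
    · intro t htt
      rw [scaleMap_congr hT' K S St hagree htt]
      exact hcore.2 t htt
  · intro S₁ S₂ hS₁ hS₂
    haveI : Nonempty (Set.Icc (0:ℝ) T) := Set.Nonempty.to_subtype (Set.nonempty_Icc.2 hT')
    set M := ⨆ t : Set.Icc (0:ℝ) T, |S₁ ↑t - S₂ ↑t| with hMdef
    have hbdd : BddAbove (Set.range fun t : Set.Icc (0:ℝ) T => |S₁ ↑t - S₂ ↑t|) := by
      have hc : ContinuousOn (fun x => |S₁ x - S₂ x|) (Set.Icc (0:ℝ) T) := (hS₁.sub hS₂).abs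
      have himg : (Set.range fun t : Set.Icc (0:ℝ) T => |S₁ ↑t - S₂ ↑t|)
          = (fun x => |S₁ x - S₂ x|) '' Set.Icc (0:ℝ) T := by
        ext y
        constructor
        · rintro ⟨⟨x, hx⟩, rfl⟩; exact ⟨x, hx, rfl⟩
        · rintro ⟨x, hx, rfl⟩; exact ⟨⟨x, hx⟩, rfl⟩
      rw [himg]
      exact (isCompact_Icc.image_of_continuousOn hc).bddAbove
    have hM : ∀ x ∈ Set.Icc (0:ℝ) T, |S₁ x - S₂ x| ≤ M := fun x hx =>
      le_ciSup hbdd (⟨x, hx⟩ : Set.Icc (0:ℝ) T)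
    have hM0 : 0 ≤ M := le_trans (abs_nonneg _) (hM 0 (Set.left_mem_Icc.2 hT'))
    set St₁ : ℝ → ℝ := fun x => S₁ (max 0 (min x T)) with h1def
    set St₂ : ℝ → ℝ := fun x => S₂ (max 0 (min x T)) with h2def
    have hc₁ : Continuous St₁ := hS₁.comp_continuous hcl_cont hcl_mem
    have hc₂ : Continuous St₂ := hS₂.comp_continuous hcl_cont hcl_mem
    obtain ⟨C₁, hC₁⟩ := isCompact_Icc.exists_bound_of_continuousOn hS₁
    obtain ⟨C₂, hC₂⟩ := isCompact_Icc.exists_bound_of_continuousOn hS₂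
    have hC₁' : ∀ x, |St₁ x| ≤ C₁ := fun x => by
      simpa [Real.norm_eq_abs] using hC₁ _ (hcl_mem x)
    have hC₂' : ∀ x, |St₂ x| ≤ C₂ := fun x => by
      simpa [Real.norm_eq_abs] using hC₂ _ (hcl_mem x)
    have hMd : ∀ x, |St₁ x - St₂ x| ≤ M := fun x => hM _ (hcl_mem x)
    have hagree₁ : ∀ x ∈ Set.Icc (0:ℝ) T, S₁ x = St₁ x := fun x hx => by
      simp only [h1def]; rw [hcl_id x hx]
    have hagree₂ : ∀ x ∈ Set.Icc (0:ℝ) T, S₂ x = St₂ x := fun x hx => by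
      simp only [h2def]; rw [hcl_id x hx]
    refine ciSup_le fun t => ?_
    rw [scaleMap_congr hT' K S₁ St₁ hagree₁ t.2, scaleMap_congr hT' K S₂ St₂ hagree₂ t.2]
    exact part_two_core hT' hb_meas hb_nonneg hC K St₁ St₂ hc₁ hc₂ hC₁' hC₂' hM0 hMd t.2
end

section
/- Let T > 0, let b : [0,T] → [0,∞) be continuous, and let K be a weakly continuous Markov kernel from [0,∞) to [0,∞) such that t ↦ K(t, [0, T−t)) is continuous on [0,T]. If S : [0,T] → ℝ is continuous, bounded, and satisfies the scale equation on [0,T] for parameters (b,K), then S is continuously differentiable on [0,T] and for all t ∈ [0,T]: −S′(t) + b(t) (∫_{[0,T−t)} S(t+s) K(t,ds) − S(t)) = 0. -/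
open MeasureTheory ProbabilityTheory Filter Topology

lemma scale_aux_integrable (μ : Measure ℝ) [IsProbabilityMeasure μ] {f : ℝ → ℝ} {c : ℝ}
    (hf : Continuous f) (hb : ∀ v, |f v| ≤ c) : Integrable f μ :=
  (integrable_const c).mono' hf.aestronglyMeasurable
    (ae_of_all _ fun v => by simpa [Real.norm_eq_abs] using hb v)

lemma scale_aux_cont (T : ℝ) (K : Kernel ℝ ℝ) [IsMarkovKernel K]
    (hK_supp : ∀ x : ℝ, (K x) (Set.Iio 0) = 0)
    (hK_cont : ∀ f : ℝ → ℝ, Continuous f → (∃ C : ℝ, ∀ y, |f y| ≤ C) →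
      ContinuousOn (fun x => ∫ y, f y ∂(K x)) (Set.Ici 0))
    (hK_Ico : ContinuousOn (fun t => ((K t) (Set.Ico 0 (T - t))).toReal) (Set.Icc 0 T))
    (Sc : ℝ → ℝ) (hSc : Continuous Sc) (C : ℝ) (hC : 1 ≤ C) (hSc_bdd : ∀ x, |Sc x| ≤ C)
    (hSc_unif : ∀ ε > 0, ∃ δ > 0, ∀ x y : ℝ, |x - y| < δ → |Sc x - Sc y| ≤ ε) :
    ContinuousOn (fun t => ∫ v in Set.Ico (0:ℝ) (T - t), Sc (t + v) ∂(K t)) (Set.Icc 0 T) := by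
  intro t₀ ht₀
  have hC0 : (0:ℝ) < C := lt_of_lt_of_le one_pos hC
  have hae : ∀ t : ℝ, ∀ᵐ v ∂(K t), (0:ℝ) ≤ v := by
    intro t
    filter_upwards [measure_eq_zero_iff_ae_notMem.mp (hK_supp t)] with v hv
    simpa [Set.mem_Iio, not_lt] using hv
  have hle1 : ∀ (t : ℝ) (s : Set ℝ), ((K t) s).toReal ≤ 1 := by
    intro t s
    have h := prob_le_one (μ := K t) (s := s)
    have := ENNReal.toReal_mono (by simp) h
    simpa using this
  unfold ContinuousWithinAt
  apply Metric.tendsto_nhds.mpr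
  intro ε hε
  have h4C : (0:ℝ) < 4 * C + 3 := by linarith
  set ε₁ := ε / (4 * C + 3) with hε₁def
  have hε₁ : 0 < ε₁ := div_pos hε h4C
  -- uniform continuity modulus
  obtain ⟨δ₁, hδ₁, hδ₁'⟩ := hSc_unif ε₁ hε₁
  -- choice of d
  obtain ⟨d, hd0, hdspec⟩ : ∃ d : ℝ, 0 < d ∧
      ((K t₀) (Set.Ico 0 (T - t₀))).toReal - ((K t₀) (Set.Ico 0 (T - t₀ - 2 * d))).toReal ≤ ε₁ := by
    rcases le_or_gt (T - t₀) 0 with h | h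
    · refine ⟨1, one_pos, ?_⟩
      rw [Set.Ico_eq_empty (by intro hh; simp at hh; linarith),
        Set.Ico_eq_empty (by intro hh; simp at hh; linarith)]
      simpa using hε₁.le
    · set s : ℕ → Set ℝ := fun n => Set.Ico (0:ℝ) (T - t₀ - 2 * (1 / ((n:ℝ) + 1))) with hs
      have hmono : Monotone s := by
        intro n m hnm
        apply Set.Ico_subset_Ico le_rfl
        have h1 : (1:ℝ) / ((m:ℝ) + 1) ≤ 1 / ((n:ℝ) + 1) := by
          apply one_div_le_one_div_of_le (by positivity)
          exact_mod_cast by omega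
        linarith
      have hunion : (⋃ n, s n) = Set.Ico (0:ℝ) (T - t₀) := by
        ext x
        simp only [hs, Set.mem_iUnion, Set.mem_Ico]
        constructor
        · rintro ⟨n, h0, hlt⟩
          have : (0:ℝ) < 1 / ((n:ℝ) + 1) := by positivity
          exact ⟨h0, by linarith⟩
        · rintro ⟨h0, hlt⟩
          obtain ⟨n, hn⟩ := exists_nat_gt (2 / (T - t₀ - x))
          refine ⟨n, h0, ?_⟩
          have h1 : (0:ℝ) < T - t₀ - x := by linarith
          have h2 : 2 / (T - t₀ - x) < (n:ℝ) + 1 := by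
            have : (n:ℝ) < (n:ℝ) + 1 := by linarith
            linarith
          have h3 : (2:ℝ) < ((n:ℝ) + 1) * (T - t₀ - x) := by
            rw [div_lt_iff₀ h1] at h2; linarith
          have h4 : 2 * ((1:ℝ) / ((n:ℝ) + 1)) < T - t₀ - x := by
            rw [mul_one_div, div_lt_iff₀ (by positivity : (0:ℝ) < (n:ℝ) + 1)]
            linarith
          linarith
      have htends := tendsto_measure_iUnion_atTop (μ := K t₀) hmono
      rw [hunion] at htends
      have htends' : Tendsto (fun n => ((K t₀) (s n)).toReal) atTop
          (𝓝 ((K t₀) (Set.Ico 0 (T - t₀))).toReal) :=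
        (ENNReal.tendsto_toReal (measure_ne_top _ _)).comp htends
      obtain ⟨n, hn⟩ := (htends'.eventually (lt_mem_nhds
        (show ((K t₀) (Set.Ico 0 (T - t₀))).toReal - ε₁
            < ((K t₀) (Set.Ico 0 (T - t₀))).toReal by linarith))).exists
      exact ⟨1 / ((n:ℝ) + 1), by positivity, by simp only [hs] at hn; linarith⟩
  -- cutoff function
  set φ : ℝ → ℝ := fun v => max 0 (min 1 ((T - t₀ - d - v) / d)) with hφ
  have hφcont : Continuous φ :=
    continuous_const.max (continuous_const.min ((continuous_const.sub continuous_id).div_const d))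
  have hφ01 : ∀ v, 0 ≤ φ v ∧ φ v ≤ 1 :=
    fun v => ⟨le_max_left _ _, max_le zero_le_one (min_le_left _ _)⟩
  have hφabs : ∀ v, |φ v| ≤ 1 := fun v => abs_le.mpr ⟨by linarith [(hφ01 v).1], (hφ01 v).2⟩
  have hφ0 : ∀ v, T - t₀ - d ≤ v → φ v = 0 := by
    intro v hv
    apply max_eq_left
    exact le_trans (min_le_right _ _) (div_nonpos_of_nonpos_of_nonneg (by linarith) hd0.le)
  have hφ1 : ∀ v, v ≤ T - t₀ - 2 * d → φ v = 1 := by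
    intro v hv
    have h1 : (1:ℝ) ≤ (T - t₀ - d - v) / d := by rw [le_div_iff₀ hd0]; linarith
    rw [hφ]; simp only [min_eq_left h1]
    exact max_eq_right zero_le_one
  -- the fixed continuous functions
  have hfc' : ∀ s : ℝ, Continuous (fun v => Sc (s + v)) :=
    fun s => hSc.comp (continuous_const.add continuous_id)
  have hfc : Continuous (fun v => Sc (t₀ + v)) := hfc' t₀
  have hbd' : ∀ s v : ℝ, |Sc (s + v)| ≤ C := fun s v => hSc_bdd _
  have hψbd : ∀ v, |φ v * Sc (t₀ + v)| ≤ C := by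
    intro v
    rw [abs_mul]
    calc |φ v| * |Sc (t₀ + v)| ≤ 1 * C :=
          mul_le_mul (hφabs v) (hSc_bdd _) (abs_nonneg _) zero_le_one
      _ = C := one_mul C
  -- tendsto facts
  have hm : Tendsto (fun t => ((K t) (Set.Ico 0 (T - t))).toReal) (𝓝[Set.Icc 0 T] t₀)
      (𝓝 (((K t₀) (Set.Ico 0 (T - t₀))).toReal)) := hK_Ico t₀ ht₀
  have hΦ : Tendsto (fun t => ∫ v, φ v ∂(K t)) (𝓝[Set.Icc 0 T] t₀)
      (𝓝 (∫ v, φ v ∂(K t₀))) :=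
    ((hK_cont φ hφcont ⟨1, hφabs⟩) t₀ ht₀.1).mono Set.Icc_subset_Ici_self
  have hΨ : Tendsto (fun t => ∫ v, φ v * Sc (t₀ + v) ∂(K t)) (𝓝[Set.Icc 0 T] t₀)
      (𝓝 (∫ v, φ v * Sc (t₀ + v) ∂(K t₀))) :=
    ((hK_cont _ (hφcont.mul hfc) ⟨C, hψbd⟩) t₀ ht₀.1).mono Set.Icc_subset_Ici_self
  have E1 := (Metric.tendsto_nhds.mp hm) ε₁ hε₁
  have E2 := (Metric.tendsto_nhds.mp hΦ) ε₁ hε₁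
  have E3 := (Metric.tendsto_nhds.mp hΨ) ε₁ hε₁
  have E4 : ∀ᶠ t in 𝓝[Set.Icc 0 T] t₀, t ∈ Set.Icc (0:ℝ) T := eventually_mem_nhdsWithin
  have E5 : ∀ᶠ t in 𝓝[Set.Icc 0 T] t₀, |t - t₀| < min δ₁ d := by
    have h := Metric.ball_mem_nhds t₀ (lt_min hδ₁ hd0)
    apply Filter.eventually_of_mem (mem_nhdsWithin_of_mem_nhds h)
    intro t ht
    simpa [Real.dist_eq] using ht
  -- the key estimate, used at t and at t₀
  have key : ∀ u : ℝ, u ∈ Set.Icc (0:ℝ) T → u < t₀ + d →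
      |(∫ v in Set.Ico (0:ℝ) (T - u), Sc (t₀ + v) ∂(K u)) - ∫ v, φ v * Sc (t₀ + v) ∂(K u)|
        ≤ C * (((K u) (Set.Ico 0 (T - u))).toReal - ∫ v, φ v ∂(K u)) := by
    intro u hu hud
    have hint_f : Integrable (fun v => Sc (t₀ + v)) (K u) := scale_aux_integrable _ hfc (hbd' t₀)
    have hint_ind : Integrable ((Set.Ico (0:ℝ) (T - u)).indicator (fun v => Sc (t₀ + v))) (K u) :=
      hint_f.indicator measurableSet_Ico
    have hint_ψ : Integrable (fun v => φ v * Sc (t₀ + v)) (K u) :=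
      scale_aux_integrable _ (hφcont.mul hfc) hψbd
    have hint_ind1 : Integrable ((Set.Ico (0:ℝ) (T - u)).indicator (fun _ => (1:ℝ))) (K u) :=
      (integrable_const 1).indicator measurableSet_Ico
    have hint_φ : Integrable φ (K u) := scale_aux_integrable _ hφcont hφabs
    rw [← integral_indicator (measurableSet_Ico) (f := fun v => Sc (t₀ + v)),
      ← integral_sub hint_ind hint_ψ]
    have hb : ∀ᵐ v ∂(K u),
        ‖(Set.Ico (0:ℝ) (T - u)).indicator (fun v => Sc (t₀ + v)) v - φ v * Sc (t₀ + v)‖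
          ≤ C * ((Set.Ico (0:ℝ) (T - u)).indicator (fun _ => (1:ℝ)) v - φ v) := by
      filter_upwards [hae u] with v hv
      by_cases hvX : v ∈ Set.Ico (0:ℝ) (T - u)
      · rw [Set.indicator_of_mem hvX, Set.indicator_of_mem hvX]
        have h01 := hφ01 v
        calc ‖Sc (t₀ + v) - φ v * Sc (t₀ + v)‖ = (1 - φ v) * |Sc (t₀ + v)| := by
              rw [Real.norm_eq_abs, ← abs_of_nonneg (by linarith : (0:ℝ) ≤ 1 - φ v), ← abs_mul]
              ring_nf
          _ ≤ (1 - φ v) * C := mul_le_mul_of_nonneg_left (hSc_bdd _) (by linarith)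
          _ = C * (1 - φ v) := mul_comm _ _
      · rw [Set.indicator_of_notMem hvX, Set.indicator_of_notMem hvX]
        have hvge : T - u ≤ v := by
          by_contra hcon
          exact hvX ⟨hv, lt_of_not_ge hcon⟩
        have hz : φ v = 0 := hφ0 v (by linarith)
        simp [hz]
    calc ‖∫ v, ((Set.Ico (0:ℝ) (T - u)).indicator (fun v => Sc (t₀ + v)) v
            - φ v * Sc (t₀ + v)) ∂(K u)‖
        ≤ ∫ v, C * ((Set.Ico (0:ℝ) (T - u)).indicator (fun _ => (1:ℝ)) v - φ v) ∂(K u) :=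
          norm_integral_le_of_norm_le ((hint_ind1.sub hint_φ).const_mul C) hb
      _ = C * (((K u) (Set.Ico 0 (T - u))).toReal - ∫ v, φ v ∂(K u)) := by
          rw [integral_const_mul, integral_sub hint_ind1 hint_φ,
            integral_indicator measurableSet_Ico, setIntegral_const]
          simp [measureReal_def]
  -- bound at t₀ : m₀ - Φ₀ ≤ ε₁
  have hmΦ0 : ((K t₀) (Set.Ico 0 (T - t₀))).toReal - (∫ v, φ v ∂(K t₀)) ≤ ε₁ := by
    have hint_ind1 : Integrable ((Set.Ico (0:ℝ) (T - t₀ - 2 * d)).indicator (fun _ => (1:ℝ)))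
        (K t₀) := (integrable_const 1).indicator measurableSet_Ico
    have hint_φ : Integrable φ (K t₀) := scale_aux_integrable _ hφcont hφabs
    have hmono : ∀ v, (Set.Ico (0:ℝ) (T - t₀ - 2 * d)).indicator (fun _ => (1:ℝ)) v ≤ φ v := by
      intro v
      by_cases hvX : v ∈ Set.Ico (0:ℝ) (T - t₀ - 2 * d)
      · rw [Set.indicator_of_mem hvX, hφ1 v hvX.2.le]
      · rw [Set.indicator_of_notMem hvX]; exact (hφ01 v).1
    have hle := integral_mono hint_ind1 hint_φ hmono
    rw [integral_indicator measurableSet_Ico, setIntegral_const] at hle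
    simp only [smul_eq_mul, mul_one, measureReal_def] at hle
    linarith
  filter_upwards [E1, E2, E3, E4, E5] with t h1 h2 h3 ht hclose
  have htd : t < t₀ + d := by
    have := abs_lt.mp (lt_of_lt_of_le hclose (min_le_right δ₁ d))
    linarith [this.2]
  have htδ : |t - t₀| < δ₁ := lt_of_lt_of_le hclose (min_le_left δ₁ d)
  rw [Real.dist_eq] at h1 h2 h3 ⊢
  -- I1
  have hint_t1 : IntegrableOn (fun v => Sc (t + v)) (Set.Ico (0:ℝ) (T - t)) (K t) :=
    (scale_aux_integrable _ (hfc' t) (hbd' t)).integrableOn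
  have hint_t2 : IntegrableOn (fun v => Sc (t₀ + v)) (Set.Ico (0:ℝ) (T - t)) (K t) :=
    (scale_aux_integrable _ hfc (hbd' t₀)).integrableOn
  have I1 : |(∫ v in Set.Ico (0:ℝ) (T - t), Sc (t + v) ∂(K t))
      - ∫ v in Set.Ico (0:ℝ) (T - t), Sc (t₀ + v) ∂(K t)| ≤ ε₁ := by
    rw [← integral_sub hint_t1 hint_t2]
    have hbd : ∀ v ∈ Set.Ico (0:ℝ) (T - t), ‖Sc (t + v) - Sc (t₀ + v)‖ ≤ ε₁ := by
      intro v _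
      rw [Real.norm_eq_abs]
      exact hδ₁' (t + v) (t₀ + v) (by simpa using htδ)
    calc ‖∫ v in Set.Ico (0:ℝ) (T - t), (Sc (t + v) - Sc (t₀ + v)) ∂(K t)‖
        ≤ ε₁ * ((K t) (Set.Ico (0:ℝ) (T - t))).toReal :=
          norm_setIntegral_le_of_norm_le_const (measure_lt_top _ _) hbd
      _ ≤ ε₁ * 1 := mul_le_mul_of_nonneg_left (hle1 _ _) hε₁.le
      _ = ε₁ := mul_one _
  have I2 := key t ht htd
  have I4 := key t₀ ht₀ (by linarith)
  have hmΦt : ((K t) (Set.Ico 0 (T - t))).toReal - (∫ v, φ v ∂(K t)) < 3 * ε₁ := by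
    have ha1 := abs_lt.mp h1
    have ha2 := abs_lt.mp h2
    linarith [ha1.2, ha2.1]
  have I2' : |(∫ v in Set.Ico (0:ℝ) (T - t), Sc (t₀ + v) ∂(K t))
      - ∫ v, φ v * Sc (t₀ + v) ∂(K t)| ≤ C * (3 * ε₁) :=
    le_trans I2 (mul_le_mul_of_nonneg_left hmΦt.le hC0.le)
  have I4' : |(∫ v in Set.Ico (0:ℝ) (T - t₀), Sc (t₀ + v) ∂(K t₀))
      - ∫ v, φ v * Sc (t₀ + v) ∂(K t₀)| ≤ C * ε₁ :=
    le_trans I4 (mul_le_mul_of_nonneg_left hmΦ0 hC0.le)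
  have habs : |(∫ v in Set.Ico (0:ℝ) (T - t), Sc (t + v) ∂(K t))
      - ∫ v in Set.Ico (0:ℝ) (T - t₀), Sc (t₀ + v) ∂(K t₀)| ≤ ε₁ + C * (3 * ε₁) + ε₁ + C * ε₁ := by
    calc |(∫ v in Set.Ico (0:ℝ) (T - t), Sc (t + v) ∂(K t))
        - ∫ v in Set.Ico (0:ℝ) (T - t₀), Sc (t₀ + v) ∂(K t₀)|
        ≤ |(∫ v in Set.Ico (0:ℝ) (T - t), Sc (t + v) ∂(K t))
            - ∫ v in Set.Ico (0:ℝ) (T - t), Sc (t₀ + v) ∂(K t)|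
          + |(∫ v in Set.Ico (0:ℝ) (T - t), Sc (t₀ + v) ∂(K t))
            - ∫ v, φ v * Sc (t₀ + v) ∂(K t)|
          + |(∫ v, φ v * Sc (t₀ + v) ∂(K t)) - ∫ v, φ v * Sc (t₀ + v) ∂(K t₀)|
          + |(∫ v, φ v * Sc (t₀ + v) ∂(K t₀))
            - ∫ v in Set.Ico (0:ℝ) (T - t₀), Sc (t₀ + v) ∂(K t₀)| := by
            have h4 := abs_sub_le (∫ v, φ v * Sc (t₀ + v) ∂(K t))
              (∫ v, φ v * Sc (t₀ + v) ∂(K t₀))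
              (∫ v in Set.Ico (0:ℝ) (T - t₀), Sc (t₀ + v) ∂(K t₀))
            have h5 := abs_sub_le (∫ v in Set.Ico (0:ℝ) (T - t), Sc (t₀ + v) ∂(K t))
              (∫ v, φ v * Sc (t₀ + v) ∂(K t))
              (∫ v in Set.Ico (0:ℝ) (T - t₀), Sc (t₀ + v) ∂(K t₀))
            have h6 := abs_sub_le (∫ v in Set.Ico (0:ℝ) (T - t), Sc (t + v) ∂(K t))
              (∫ v in Set.Ico (0:ℝ) (T - t), Sc (t₀ + v) ∂(K t))
              (∫ v in Set.Ico (0:ℝ) (T - t₀), Sc (t₀ + v) ∂(K t₀))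
            linarith
      _ ≤ ε₁ + C * (3 * ε₁) + ε₁ + C * ε₁ := by
            rw [abs_sub_comm (∫ v, φ v * Sc (t₀ + v) ∂(K t₀))]
            linarith [I1, I2', h3, I4']
  have hfinal : ε₁ + C * (3 * ε₁) + ε₁ + C * ε₁ < ε := by
    have : ε = (4 * C + 3) * ε₁ := by
      rw [hε₁def, mul_div_cancel₀]
      exact ne_of_gt h4C
    nlinarith
  calc |(∫ v in Set.Ico (0:ℝ) (T - t), Sc (t + v) ∂(K t))
      - ∫ v in Set.Ico (0:ℝ) (T - t₀), Sc (t₀ + v) ∂(K t₀)|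
      ≤ ε₁ + C * (3 * ε₁) + ε₁ + C * ε₁ := habs
    _ < ε := hfinal

/-- **Corollary 4.2 (integro-differential equation for the scale function).**
If `b` is continuous on `[0,T]`, `K` is a weakly continuous Markov kernel such that
`t ↦ K(t, [0,T-t))` is continuous on `[0,T]`, and `S` is continuous, bounded and satisfies
the scale equation on `[0,T]`, then `S ∈ C¹([0,T])` and
`-S'(t) + b(t) (∫_{[0,T-t)} S(t+s) K(t,ds) - S(t)) = 0` on `[0,T]`. -/
theorem stmt_2
    (T : ℝ) (hT : 0 < T)
    (b : ℝ → ℝ) (hb_cont : ContinuousOn b (Set.Icc 0 T))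
    (hb_nonneg : ∀ t ∈ Set.Icc (0:ℝ) T, 0 ≤ b t)
    (K : Kernel ℝ ℝ) [IsMarkovKernel K]
    (hK_supp : ∀ x : ℝ, (K x) (Set.Iio 0) = 0)
    (hK_cont : ∀ f : ℝ → ℝ, Continuous f → (∃ C : ℝ, ∀ y, |f y| ≤ C) →
      ContinuousOn (fun x => ∫ y, f y ∂(K x)) (Set.Ici 0))
    (hK_Ico : ContinuousOn (fun t => ((K t) (Set.Ico 0 (T - t))).toReal) (Set.Icc 0 T))
    (S : ℝ → ℝ) (hS_cont : ContinuousOn S (Set.Icc 0 T))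
    (hS_bdd : ∃ C : ℝ, ∀ t ∈ Set.Icc (0:ℝ) T, |S t| ≤ C)
    (hS_eq : ∀ t ∈ Set.Icc (0:ℝ) T,
      S t = Real.exp (-(∫ u in (0:ℝ)..t, b u)) +
        Real.exp (-(∫ u in (0:ℝ)..t, b u)) *
          ∫ s in (0:ℝ)..t, b s * Real.exp (∫ u in (0:ℝ)..s, b u) *
            (∫ v in Set.Ico (0:ℝ) (T - s), S (s + v) ∂(K s))) :
    ∃ S' : ℝ → ℝ, ContinuousOn S' (Set.Icc 0 T) ∧
      (∀ t ∈ Set.Icc (0:ℝ) T, HasDerivWithinAt S (S' t) (Set.Icc 0 T) t) ∧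
      ∀ t ∈ Set.Icc (0:ℝ) T,
        -S' t + b t * ((∫ s in Set.Ico (0:ℝ) (T - t), S (t + s) ∂(K t)) - S t) = 0 := by
  obtain ⟨C₀, hC₀⟩ := hS_bdd
  -- the clamped extension of S
  set cl : ℝ → ℝ := fun x => min T (max x 0) with hcl
  have hcl_mem : ∀ x, cl x ∈ Set.Icc (0:ℝ) T :=
    fun x => ⟨le_min hT.le (le_max_right x 0), min_le_left _ _⟩
  have hcl_id : ∀ x ∈ Set.Icc (0:ℝ) T, cl x = x := by
    intro x hx
    rw [hcl]
    simp only [max_eq_left hx.1, min_eq_right hx.2]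
  have hcl_lip : ∀ x y : ℝ, |cl x - cl y| ≤ |x - y| := by
    intro x y
    calc |cl x - cl y| ≤ max |T - T| |max x 0 - max y 0| := abs_min_sub_min_le_max _ _ _ _
      _ ≤ |x - y| := by
          rw [sub_self, abs_zero]
          exact max_le (abs_nonneg _) (abs_max_sub_max_le_abs x y 0)
  set Sc : ℝ → ℝ := fun x => S (cl x) with hScdef
  have hSc_cont : Continuous Sc := by
    apply hS_cont.comp_continuous
    · exact continuous_const.min (continuous_id.max continuous_const)
    · exact hcl_mem
  set C : ℝ := |C₀| + 1 with hCdef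
  have hC : 1 ≤ C := by rw [hCdef]; linarith [abs_nonneg C₀]
  have hSc_bdd : ∀ x, |Sc x| ≤ C := by
    intro x
    calc |S (cl x)| ≤ C₀ := hC₀ _ (hcl_mem x)
      _ ≤ |C₀| := le_abs_self _
      _ ≤ C := by rw [hCdef]; linarith
  have hSc_unif : ∀ ε > 0, ∃ δ > 0, ∀ x y : ℝ, |x - y| < δ → |Sc x - Sc y| ≤ ε := by
    intro ε hε
    obtain ⟨δ, hδ, hδ'⟩ := Metric.uniformContinuousOn_iff.mp
      (isCompact_Icc.uniformContinuousOn_of_continuous hS_cont) ε hε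
    refine ⟨δ, hδ, fun x y hxy => ?_⟩
    have h1 : dist (cl x) (cl y) < δ := by
      rw [Real.dist_eq]
      exact lt_of_le_of_lt (hcl_lip x y) (by rwa [← Real.dist_eq] at hxy ⊢)
    have := hδ' (cl x) (hcl_mem x) (cl y) (hcl_mem y) h1
    rw [Real.dist_eq] at this
    exact this.le
  -- continuity of the kernel integral term
  have hGc : ContinuousOn (fun t => ∫ v in Set.Ico (0:ℝ) (T - t), Sc (t + v) ∂(K t))
      (Set.Icc 0 T) :=
    scale_aux_cont T K hK_supp hK_cont hK_Ico Sc hSc_cont C hC hSc_bdd hSc_unif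
  have hG_eq : ∀ t ∈ Set.Icc (0:ℝ) T,
      (∫ v in Set.Ico (0:ℝ) (T - t), S (t + v) ∂(K t))
        = ∫ v in Set.Ico (0:ℝ) (T - t), Sc (t + v) ∂(K t) := by
    intro t ht
    apply setIntegral_congr_fun measurableSet_Ico
    intro v hv
    have hmem : t + v ∈ Set.Icc (0:ℝ) T := ⟨by linarith [ht.1, hv.1], by linarith [hv.2]⟩
    simp only [hScdef]
    rw [hcl_id _ hmem]
  have hg_cont : ContinuousOn (fun t => ∫ v in Set.Ico (0:ℝ) (T - t), S (t + v) ∂(K t))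
      (Set.Icc 0 T) := hGc.congr hG_eq
  -- derivative of B
  have hB_deriv : ∀ t ∈ Set.Icc (0:ℝ) T,
      HasDerivWithinAt (fun u => ∫ x in (0:ℝ)..u, b x) (b t) (Set.Icc 0 T) t := by
    intro t ht
    haveI : Fact (t ∈ Set.Icc (0:ℝ) T) := ⟨ht⟩
    have hsub : Set.uIcc (0:ℝ) t ⊆ Set.Icc 0 T := by
      rw [Set.uIcc_of_le ht.1]
      exact Set.Icc_subset_Icc le_rfl ht.2
    exact intervalIntegral.integral_hasDerivWithinAt_right
      ((hb_cont.mono hsub).intervalIntegrable)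
      (hb_cont.stronglyMeasurableAtFilter_nhdsWithin measurableSet_Icc t)
      (hb_cont t ht)
  have hB_cont : ContinuousOn (fun u => ∫ x in (0:ℝ)..u, b x) (Set.Icc 0 T) :=
    fun t ht => (hB_deriv t ht).continuousWithinAt
  -- the integrand of the scale equation
  set h₀ : ℝ → ℝ := fun s => b s * Real.exp (∫ u in (0:ℝ)..s, b u) *
    (∫ v in Set.Ico (0:ℝ) (T - s), S (s + v) ∂(K s)) with hh₀def
  have hh₀_cont : ContinuousOn h₀ (Set.Icc 0 T) :=
    (hb_cont.mul (Real.continuous_exp.comp_continuousOn hB_cont)).mul hg_cont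
  -- derivative of the primitive of h₀
  have hF_deriv : ∀ t ∈ Set.Icc (0:ℝ) T,
      HasDerivWithinAt (fun u => ∫ s in (0:ℝ)..u, h₀ s) (h₀ t) (Set.Icc 0 T) t := by
    intro t ht
    haveI : Fact (t ∈ Set.Icc (0:ℝ) T) := ⟨ht⟩
    have hsub : Set.uIcc (0:ℝ) t ⊆ Set.Icc 0 T := by
      rw [Set.uIcc_of_le ht.1]
      exact Set.Icc_subset_Icc le_rfl ht.2
    exact intervalIntegral.integral_hasDerivWithinAt_right
      ((hh₀_cont.mono hsub).intervalIntegrable)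
      (hh₀_cont.stronglyMeasurableAtFilter_nhdsWithin measurableSet_Icc t)
      (hh₀_cont t ht)
  refine ⟨fun t => b t * ((∫ v in Set.Ico (0:ℝ) (T - t), S (t + v) ∂(K t)) - S t), ?_, ?_, ?_⟩
  · exact hb_cont.mul (hg_cont.sub hS_cont)
  · intro t ht
    -- S agrees on Icc with the explicit solution
    have hP : HasDerivWithinAt
        (fun u => Real.exp (-(∫ x in (0:ℝ)..u, b x)) +
          Real.exp (-(∫ x in (0:ℝ)..u, b x)) * ∫ s in (0:ℝ)..u, h₀ s)
        (Real.exp (-(∫ x in (0:ℝ)..t, b x)) * (-(b t)) +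
          (Real.exp (-(∫ x in (0:ℝ)..t, b x)) * (-(b t)) * (∫ s in (0:ℝ)..t, h₀ s) +
            Real.exp (-(∫ x in (0:ℝ)..t, b x)) * h₀ t))
        (Set.Icc 0 T) t := by
      have hE : HasDerivWithinAt (fun u => Real.exp (-(∫ x in (0:ℝ)..u, b x)))
          (Real.exp (-(∫ x in (0:ℝ)..t, b x)) * (-(b t))) (Set.Icc 0 T) t :=
        ((hB_deriv t ht).neg).exp
      exact hE.add (hE.mul (hF_deriv t ht))
    have hkey : Real.exp (-(∫ x in (0:ℝ)..t, b x)) * (-(b t)) +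
        (Real.exp (-(∫ x in (0:ℝ)..t, b x)) * (-(b t)) * (∫ s in (0:ℝ)..t, h₀ s) +
          Real.exp (-(∫ x in (0:ℝ)..t, b x)) * h₀ t)
        = b t * ((∫ v in Set.Ico (0:ℝ) (T - t), S (t + v) ∂(K t)) - S t) := by
      have h1 : Real.exp (-(∫ x in (0:ℝ)..t, b x)) * Real.exp (∫ x in (0:ℝ)..t, b x) = 1 := by
        rw [← Real.exp_add]; simp
      have h2 := hS_eq t ht
      rw [hh₀def]
      linear_combination (b t) * h2 +
        b t * (∫ v in Set.Ico (0:ℝ) (T - t), S (t + v) ∂(K t)) * h1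
    rw [hkey] at hP
    apply hP.congr
    · intro y hy
      exact hS_eq y hy
    · exact hS_eq t ht
  · intro t ht
    ring
end

section
/- Let T > 0, let b : [0,T] → (0,∞) be continuously differentiable and d : [0,T] → ℝ be continuous. Suppose S : [0,T] → ℝ is continuously differentiable and satisfies, for all t ∈ [0,T], S′(t) = b(t) (∫_tᵀ S(s) d(s) exp(−∫_tˢ d(u)du) ds − S(t)). Then S is twice differentiable on [0,T] and, for all t ∈ [0,T], S″(t) = (b′(t)/b(t) + d(t) − b(t)) S′(t). -/
open MeasureTheory Filter Topology

/-- **Section 4.3.3 (reduction to a second-order ODE).**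
If `b ∈ C¹([0,T])` is positive, `d` is continuous on `[0,T]`, and `S ∈ C¹([0,T])` satisfies
`S'(t) = b(t) (∫_tᵀ S(s) d(s) e^{-∫_tˢ d} ds - S(t))`, then `S` is twice differentiable with
`S''(t) = (b'(t)/b(t) + d(t) - b(t)) S'(t)` on `[0,T]`. -/
theorem stmt_3
    (T : ℝ) (hT : 0 < T)
    (b b' : ℝ → ℝ)
    (hb_pos : ∀ t ∈ Set.Icc (0:ℝ) T, 0 < b t)
    (hb_deriv : ∀ t ∈ Set.Icc (0:ℝ) T, HasDerivWithinAt b (b' t) (Set.Icc 0 T) t)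
    (hb'_cont : ContinuousOn b' (Set.Icc 0 T))
    (d : ℝ → ℝ) (hd_cont : ContinuousOn d (Set.Icc 0 T))
    (S S' : ℝ → ℝ)
    (hS_deriv : ∀ t ∈ Set.Icc (0:ℝ) T, HasDerivWithinAt S (S' t) (Set.Icc 0 T) t)
    (hS'_cont : ContinuousOn S' (Set.Icc 0 T))
    (hS_eq : ∀ t ∈ Set.Icc (0:ℝ) T,
      S' t = b t * ((∫ s in t..T, S s * d s * Real.exp (-(∫ u in t..s, d u))) - S t)) :
    ∃ S'' : ℝ → ℝ,
      (∀ t ∈ Set.Icc (0:ℝ) T, HasDerivWithinAt S' (S'' t) (Set.Icc 0 T) t) ∧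
      ∀ t ∈ Set.Icc (0:ℝ) T, S'' t = (b' t / b t + d t - b t) * S' t := by
  have hTle : (0:ℝ) ≤ T := hT.le
  set K := Set.Icc (0:ℝ) T with hK
  -- continuous extensions
  set dd : ℝ → ℝ := Set.IccExtend hTle (K.restrict d) with hdd_def
  set SS : ℝ → ℝ := Set.IccExtend hTle (K.restrict S) with hSS_def
  have hS_cont : ContinuousOn S K := fun t ht => (hS_deriv t ht).continuousWithinAt
  have hdd_cont : Continuous dd := hd_cont.restrict.Icc_extend'
  have hSS_cont : Continuous SS := hS_cont.restrict.Icc_extend'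
  have hdd_eq : ∀ t ∈ K, dd t = d t := fun t ht => Set.IccExtend_of_mem hTle _ ht
  have hSS_eq : ∀ t ∈ K, SS t = S t := fun t ht => Set.IccExtend_of_mem hTle _ ht
  set A : ℝ → ℝ := fun t => ∫ u in (0:ℝ)..t, dd u with hA_def
  have hA_deriv : ∀ t : ℝ, HasDerivAt A (dd t) t := fun t =>
    intervalIntegral.integral_hasDerivAt_right (hdd_cont.intervalIntegrable _ _)
      (hdd_cont.stronglyMeasurableAtFilter _ _) hdd_cont.continuousAt
  have hA_cont : Continuous A := by
    have : Differentiable ℝ A := fun t => (hA_deriv t).differentiableAt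
    exact this.continuous
  set g : ℝ → ℝ := fun u => SS u * dd u * Real.exp (-(A u)) with hg_def
  have hg_cont : Continuous g := by
    exact (hSS_cont.mul hdd_cont).mul (Real.continuous_exp.comp hA_cont.neg)
  set G : ℝ → ℝ := fun t => ∫ s in (0:ℝ)..t, g s with hG_def
  have hG_deriv : ∀ t : ℝ, HasDerivAt G (g t) t := fun t =>
    intervalIntegral.integral_hasDerivAt_right (hg_cont.intervalIntegrable _ _)
      (hg_cont.stronglyMeasurableAtFilter _ _) hg_cont.continuousAt
  set C : ℝ := ∫ s in (0:ℝ)..T, g s with hC_def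
  set I : ℝ → ℝ := fun t => Real.exp (A t) * (C - G t) with hI_def
  -- key identity
  have hkey : ∀ t ∈ K, (∫ s in t..T, S s * d s * Real.exp (-(∫ u in t..s, d u))) = I t := by
    intro t ht
    have ht0 : (0:ℝ) ≤ t := ht.1
    have htT : t ≤ T := ht.2
    have h1 : (∫ s in t..T, S s * d s * Real.exp (-(∫ u in t..s, d u)))
        = ∫ s in t..T, Real.exp (A t) * g s := by
      apply intervalIntegral.integral_congr
      intro s hs
      rw [Set.uIcc_of_le htT] at hs
      have hsK : s ∈ K := ⟨ht0.trans hs.1, hs.2⟩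
      have hinner : (∫ u in t..s, d u) = ∫ u in t..s, dd u := by
        apply intervalIntegral.integral_congr
        intro u hu
        rw [Set.uIcc_of_le hs.1] at hu
        exact (hdd_eq u ⟨ht0.trans hu.1, hu.2.trans hsK.2⟩).symm
      have hsub : (∫ u in t..s, dd u) = A s - A t := by
        rw [hA_def]
        exact (intervalIntegral.integral_interval_sub_left
          (hdd_cont.intervalIntegrable _ _) (hdd_cont.intervalIntegrable _ _)).symm
      show S s * d s * Real.exp (-(∫ u in t..s, d u)) = Real.exp (A t) * g s
      simp only [hg_def]
      rw [hinner, hsub, hSS_eq s hsK, hdd_eq s hsK, neg_sub, sub_eq_add_neg,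
        Real.exp_add]
      ring
    rw [h1, intervalIntegral.integral_const_mul, hI_def]
    congr 1
    rw [hC_def, hG_def]
    exact (intervalIntegral.integral_interval_sub_left
      (hg_cont.intervalIntegrable _ _) (hg_cont.intervalIntegrable _ _)).symm
  have hS'_eq : ∀ t ∈ K, S' t = b t * (I t - S t) := by
    intro t ht; rw [hS_eq t ht, hkey t ht]
  -- derivative of I
  have hI_deriv : ∀ t ∈ K, HasDerivAt I (d t * I t - d t * S t) t := by
    intro t ht
    have h1 : HasDerivAt I (Real.exp (A t) * dd t * (C - G t)
        + Real.exp (A t) * (0 - g t)) t :=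
      ((hA_deriv t).exp).mul ((hasDerivAt_const t C).sub (hG_deriv t))
    have e1 : Real.exp (A t) * g t = d t * S t := by
      have e0 : Real.exp (A t) * Real.exp (-(A t)) = 1 := by
        rw [← Real.exp_add]; simp
      simp only [hg_def]
      rw [hSS_eq t ht, hdd_eq t ht]
      linear_combination S t * d t * e0
    have h2 : Real.exp (A t) * dd t * (C - G t) + Real.exp (A t) * (0 - g t)
        = d t * I t - d t * S t := by
      rw [hdd_eq t ht]
      simp only [hI_def]
      linear_combination -e1
    rwa [h2] at h1
  -- the second derivative
  refine ⟨fun t => (b' t / b t + d t - b t) * S' t, ?_, fun t ht => rfl⟩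
  intro t ht
  have hbne : b t ≠ 0 := (hb_pos t ht).ne'
  have hF : HasDerivWithinAt (fun u => b u * (I u - S u))
      (b' t * (I t - S t) + b t * ((d t * I t - d t * S t) - S' t)) K t :=
    (hb_deriv t ht).mul (((hI_deriv t ht).hasDerivWithinAt).sub (hS_deriv t ht))
  have hcongr : HasDerivWithinAt S'
      (b' t * (I t - S t) + b t * ((d t * I t - d t * S t) - S' t)) K t :=
    hF.congr (fun u hu => hS'_eq u hu) (hS'_eq t ht)
  have hval : b' t * (I t - S t) + b t * ((d t * I t - d t * S t) - S' t)
      = (b' t / b t + d t - b t) * S' t := by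
    have hIS : I t - S t = S' t / b t := by
      rw [hS'_eq t ht]; field_simp
    have hdI : d t * I t - d t * S t = d t * (S' t / b t) := by
      rw [← hIS]; ring
    rw [hIS, hdI]; field_simp; ring
  rwa [hval] at hcongr
end

section
/- Let T > 0, let b : [0,T] → (0,∞) be continuously differentiable and d : [0,T] → ℝ be continuous. Define D = 1 + ∫₀ᵀ b(s) exp(−∫ₛᵀ (d(u) − b(u)) du) ds and S_T(t) = (1 + ∫_tᵀ b(s) exp(−∫ₛᵀ (d(u) − b(u)) du) ds) / D for t ∈ [0,T]. Then S_T is continuously differentiable on [0,T], S_T(0) = 1, S_T′(T) = −b(T) S_T(T), and for all t ∈ [0,T]: S_T′(t) = b(t) (∫_tᵀ S_T(s) d(s) exp(−∫_tˢ d(u)du) ds − S_T(t)). -/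
open MeasureTheory Filter Topology

lemma my_uIcc_sub {T t s : ℝ} (hT : 0 ≤ T) (ht : t ∈ Set.Icc 0 T) (hs : s ∈ Set.Icc 0 T) :
    Set.uIcc t s ⊆ Set.Icc 0 T := by
  rw [← Set.uIcc_of_le hT]
  exact Set.uIcc_subset_uIcc (by rwa [Set.uIcc_of_le hT]) (by rwa [Set.uIcc_of_le hT])

lemma my_ftc_left {f : ℝ → ℝ} {T : ℝ} (hT : 0 ≤ T)
    (hf : ContinuousOn f (Set.Icc 0 T)) {t : ℝ} (ht : t ∈ Set.Icc 0 T) :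
    HasDerivWithinAt (fun s => ∫ u in s..T, f u) (-f t) (Set.Icc 0 T) t := by
  haveI : Fact (t ∈ Set.Icc (0:ℝ) T) := ⟨ht⟩
  exact intervalIntegral.integral_hasDerivWithinAt_left
    ((hf.mono (my_uIcc_sub hT ht ⟨hT, le_rfl⟩)).intervalIntegrable)
    (hf.stronglyMeasurableAtFilter_nhdsWithin measurableSet_Icc t)
    (hf t ht)

lemma my_ftc_right {f : ℝ → ℝ} {T : ℝ} (hT : 0 ≤ T)
    (hf : ContinuousOn f (Set.Icc 0 T)) {t : ℝ} (ht : t ∈ Set.Icc 0 T) :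
    HasDerivWithinAt (fun s => ∫ u in (0:ℝ)..s, f u) (f t) (Set.Icc 0 T) t := by
  haveI : Fact (t ∈ Set.Icc (0:ℝ) T) := ⟨ht⟩
  exact intervalIntegral.integral_hasDerivWithinAt_right
    ((hf.mono (my_uIcc_sub hT ⟨le_rfl, hT⟩ ht)).intervalIntegrable)
    (hf.stronglyMeasurableAtFilter_nhdsWithin measurableSet_Icc t)
    (hf t ht)


/-- **Section 4.3.3 (explicit scale function for the inhomogeneous Markovian tree).**
With `D = 1 + ∫₀ᵀ b(s) e^{-∫ₛᵀ (d-b)} ds` and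
`S_T(t) = (1 + ∫_tᵀ b(s) e^{-∫ₛᵀ (d-b)} ds) / D`, the function `S_T` is `C¹` on `[0,T]`,
satisfies `S_T(0) = 1`, `S_T'(T) = -b(T) S_T(T)`, and solves the integro-differential
equation (4.9): `S_T'(t) = b(t) (∫_tᵀ S_T(s) d(s) e^{-∫_tˢ d} ds - S_T(t))`. -/
theorem stmt_4
    (T : ℝ) (hT : 0 < T)
    (b b' : ℝ → ℝ)
    (hb_pos : ∀ t ∈ Set.Icc (0:ℝ) T, 0 < b t)
    (hb_deriv : ∀ t ∈ Set.Icc (0:ℝ) T, HasDerivWithinAt b (b' t) (Set.Icc 0 T) t)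
    (hb'_cont : ContinuousOn b' (Set.Icc 0 T))
    (d : ℝ → ℝ) (hd_cont : ContinuousOn d (Set.Icc 0 T))
    (D : ℝ) (ST : ℝ → ℝ)
    (hD : D = 1 + ∫ s in (0:ℝ)..T, b s * Real.exp (-(∫ u in s..T, (d u - b u))))
    (hST : ∀ t, ST t =
      (1 + ∫ s in t..T, b s * Real.exp (-(∫ u in s..T, (d u - b u)))) / D) :
    ∃ ST' : ℝ → ℝ, ContinuousOn ST' (Set.Icc 0 T) ∧
      (∀ t ∈ Set.Icc (0:ℝ) T, HasDerivWithinAt ST (ST' t) (Set.Icc 0 T) t) ∧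
      ST 0 = 1 ∧ ST' T = -(b T) * ST T ∧
      ∀ t ∈ Set.Icc (0:ℝ) T,
        ST' t = b t * ((∫ s in t..T, ST s * d s * Real.exp (-(∫ u in t..s, d u))) - ST t) := by
  have hTI : T ∈ Set.Icc (0:ℝ) T := ⟨hT.le, le_rfl⟩
  have h0I : (0:ℝ) ∈ Set.Icc (0:ℝ) T := ⟨le_rfl, hT.le⟩
  have hbc : ContinuousOn b (Set.Icc 0 T) :=
    fun t ht => (hb_deriv t ht).continuousWithinAt
  have hgc : ContinuousOn (fun u => d u - b u) (Set.Icc 0 T) := hd_cont.sub hbc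
  set E : ℝ → ℝ := fun s => Real.exp (-(∫ u in s..T, (d u - b u))) with hEdef
  have hE_deriv : ∀ t ∈ Set.Icc (0:ℝ) T,
      HasDerivWithinAt E (E t * (d t - b t)) (Set.Icc 0 T) t := by
    intro t ht
    have h1 := (my_ftc_left hT.le hgc ht).neg
    have h2 := h1.exp
    simpa [hEdef, neg_neg] using h2
  have hE_cont : ContinuousOn E (Set.Icc 0 T) :=
    fun t ht => (hE_deriv t ht).continuousWithinAt
  have hE_pos : ∀ s, 0 < E s := fun s => Real.exp_pos _
  have hf1c : ContinuousOn (fun s => b s * E s) (Set.Icc 0 T) := hbc.mul hE_cont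
  set N : ℝ → ℝ := fun t => 1 + ∫ s in t..T, b s * E s with hNdef
  have hN_deriv : ∀ t ∈ Set.Icc (0:ℝ) T,
      HasDerivWithinAt N (-(b t * E t)) (Set.Icc 0 T) t := by
    intro t ht
    exact (my_ftc_left hT.le hf1c ht).const_add 1
  have hN_cont : ContinuousOn N (Set.Icc 0 T) :=
    fun t ht => (hN_deriv t ht).continuousWithinAt
  have hDN : D = N 0 := by rw [hD, hNdef]
  have hD_pos : 0 < D := by
    have h0 : 0 ≤ ∫ s in (0:ℝ)..T, b s * E s := by
      apply intervalIntegral.integral_nonneg hT.le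
      intro u hu
      exact le_of_lt (mul_pos (hb_pos u hu) (hE_pos u))
    have : D = 1 + ∫ s in (0:ℝ)..T, b s * E s := by rw [hD]
    linarith [h0, this.ge, this.le]
  have hSTN : ∀ t, ST t = N t / D := fun t => by rw [hST t, hNdef]
  have hNT : N T = 1 := by simp [hNdef]
  have hET : E T = 1 := by simp [hEdef]
  refine ⟨fun t => -(b t * E t) / D, ?_, ?_, ?_, ?_, ?_⟩
  · exact ((hbc.mul hE_cont).neg).div_const D
  · intro t ht
    have : ST = fun t => N t / D := funext fun t => hSTN t
    rw [this]
    exact (hN_deriv t ht).div_const D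
  · rw [hSTN 0, ← hDN, div_self hD_pos.ne']
  · show -(b T * E T) / D = -b T * ST T
    rw [hSTN T, hNT, hET]
    ring
  · intro t ht
    -- auxiliary functions
    set F : ℝ → ℝ := fun s => Real.exp (-(∫ u in (0:ℝ)..s, d u)) with hFdef
    have hF_deriv : ∀ x ∈ Set.Icc (0:ℝ) T,
        HasDerivWithinAt F (F x * (-(d x))) (Set.Icc 0 T) x := by
      intro x hx
      exact ((my_ftc_right hT.le hd_cont hx).neg).exp
    have hF_cont : ContinuousOn F (Set.Icc 0 T) :=
      fun x hx => (hF_deriv x hx).continuousWithinAt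
    have hF_pos : ∀ s, 0 < F s := fun s => Real.exp_pos _
    set H : ℝ → ℝ := fun s => Real.exp (∫ u in s..T, b u) with hHdef
    have hH_deriv : ∀ x ∈ Set.Icc (0:ℝ) T,
        HasDerivWithinAt H (H x * (-(b x))) (Set.Icc 0 T) x := by
      intro x hx
      exact (my_ftc_left hT.le hbc hx).exp
    have hH_cont : ContinuousOn H (Set.Icc 0 T) :=
      fun x hx => (hH_deriv x hx).continuousWithinAt
    have hHT : H T = 1 := by simp [hHdef]
    have hFT : F T = Real.exp (-(∫ u in (0:ℝ)..T, d u)) := rfl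
    -- key pointwise identity  E s * F s = F T * H s
    have hEF : ∀ s ∈ Set.Icc (0:ℝ) T, E s * F s = F T * H s := by
      intro s hs
      have hdint1 : IntervalIntegrable d volume 0 s :=
        (hd_cont.mono (my_uIcc_sub hT.le h0I hs)).intervalIntegrable
      have hdint2 : IntervalIntegrable d volume s T :=
        (hd_cont.mono (my_uIcc_sub hT.le hs hTI)).intervalIntegrable
      have hbint : IntervalIntegrable b volume s T :=
        (hbc.mono (my_uIcc_sub hT.le hs hTI)).intervalIntegrable
      have hsplit : (∫ u in (0:ℝ)..s, d u) + ∫ u in s..T, d u = ∫ u in (0:ℝ)..T, d u :=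
        intervalIntegral.integral_add_adjacent_intervals hdint1 hdint2
      have hsub : (∫ u in s..T, (d u - b u)) = (∫ u in s..T, d u) - ∫ u in s..T, b u :=
        intervalIntegral.integral_sub hdint2 hbint
      rw [hEdef, hFdef, hHdef]
      simp only
      rw [← Real.exp_add, ← Real.exp_add]
      congr 1
      rw [hsub]
      linarith
    -- FTC evaluation of ∫ N d F
    have ht0 : (0:ℝ) ≤ t := ht.1
    have htT : t ≤ T := ht.2
    have hIccsub : Set.Icc t T ⊆ Set.Icc (0:ℝ) T := Set.Icc_subset_Icc ht0 le_rfl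
    set P : ℝ → ℝ := fun s => -(N s * F s) + F T * H s with hPdef
    have hP_cont : ContinuousOn P (Set.Icc t T) :=
      (((hN_cont.mul hF_cont).neg).add (continuousOn_const.mul hH_cont)).mono hIccsub
    have hP_deriv : ∀ x ∈ Set.Ioo t T, HasDerivWithinAt P (N x * d x * F x) (Set.Ioi x) x := by
      intro x hx
      have hxI : x ∈ Set.Icc (0:ℝ) T := ⟨ht0.trans hx.1.le, hx.2.le⟩
      have hmem : Set.Icc (0:ℝ) T ∈ 𝓝 x :=
        Icc_mem_nhds (lt_of_le_of_lt ht0 hx.1) hx.2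
      have h1 : HasDerivAt P
          (-((-(b x * E x)) * F x + N x * (F x * (-(d x)))) + F T * (H x * (-(b x)))) x := by
        have hNF := ((hN_deriv x hxI).mul (hF_deriv x hxI)).neg
        have hH := HasDerivWithinAt.const_mul (F T) (hH_deriv x hxI)
        exact ((hNF.add hH).hasDerivAt hmem)
      have h2 : -((-(b x * E x)) * F x + N x * (F x * (-(d x)))) + F T * (H x * (-(b x)))
          = N x * d x * F x := by
        have h3 := hEF x hxI
        linear_combination b x * h3
      rw [h2] at h1
      exact h1.hasDerivWithinAt
    have hNdF_cont : ContinuousOn (fun s => N s * d s * F s) (Set.Icc 0 T) :=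
      (hN_cont.mul hd_cont).mul hF_cont
    have hkey : (∫ s in t..T, N s * d s * F s) = N t * F t - E t * F t := by
      have := intervalIntegral.integral_eq_sub_of_hasDeriv_right_of_le htT hP_cont hP_deriv
        ((hNdF_cont.mono (my_uIcc_sub hT.le ht hTI)).intervalIntegrable)
      rw [this, hPdef]
      simp only [hNT, hHT]
      have h3 := hEF t ht
      linear_combination h3
    -- rewrite the integrand
    have hcongr : (∫ s in t..T, ST s * d s * Real.exp (-(∫ u in t..s, d u)))
        = ∫ s in t..T, (N s * d s * F s) * (D * F t)⁻¹ := by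
      apply intervalIntegral.integral_congr
      intro s hs
      have hsI : s ∈ Set.Icc (0:ℝ) T := my_uIcc_sub hT.le ht hTI hs
      have hdint1 : IntervalIntegrable d volume 0 s :=
        (hd_cont.mono (my_uIcc_sub hT.le h0I hsI)).intervalIntegrable
      have hdint2 : IntervalIntegrable d volume 0 t :=
        (hd_cont.mono (my_uIcc_sub hT.le h0I ht)).intervalIntegrable
      have hsplit : (∫ u in (0:ℝ)..s, d u) - (∫ u in (0:ℝ)..t, d u) = ∫ u in t..s, d u :=
        intervalIntegral.integral_interval_sub_left hdint1 hdint2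
      have hexp : Real.exp (-(∫ u in t..s, d u)) = F s / F t := by
        rw [← hsplit, neg_sub]
        simp only [hFdef]
        rw [← Real.exp_sub]
        congr 1
        ring
      show ST s * d s * Real.exp (-(∫ u in t..s, d u)) = N s * d s * F s * (D * F t)⁻¹
      rw [hSTN s, hexp]
      have hFt := (hF_pos t).ne'
      field_simp
      try ring
    show -(b t * E t) / D = b t * ((∫ s in t..T, ST s * d s * Real.exp (-(∫ u in t..s, d u))) - ST t)
    rw [hcongr, intervalIntegral.integral_mul_const, hkey, hSTN t]
    have hFt := (hF_pos t).ne'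
    field_simp
    ring
end

section
/- For f : [0,1] → ℝ, let V₋(f) = sup over all finite sequences 0 ≤ σ₀ < σ₁ < ⋯ < σ_m ≤ 1 of Σ_{i=1}^m max(f(σ_{i−1}) − f(σ_i), 0) (the negative variation of f). Let (fₙ) be a sequence of functions [0,1] → ℝ with V₋(fₙ) ≤ 1 for every n, let f : [0,1] → ℝ, and let (λₙ) be a sequence of strictly increasing continuous bijections of [0,1] onto itself such that sup_{t∈[0,1]} |λₙ(t) − t| → 0 and sup_{t∈[0,1]} |fₙ(λₙ(t)) − f(t)| → 0 as n → ∞. Then V₋(f) ≤ 1. -/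
open MeasureTheory Filter Topology

/-- The set of "negative variation sums" of `f` over `[0,1]`: sums
`Σ_{i=1}^m max(f(σ_{i-1}) - f(σ_i), 0)` along finite sequences `0 ≤ σ₀ < ⋯ < σ_m ≤ 1`.
The negative variation `V₋(f)` is the supremum of this set; `V₋(f) ≤ 1` is equivalent to
every element of this set being `≤ 1`. -/
def negVarSums (f : ℝ → ℝ) : Set ℝ :=
  {y | ∃ (m : ℕ) (σ : ℕ → ℝ), 0 ≤ σ 0 ∧ σ m ≤ 1 ∧ (∀ i < m, σ i < σ (i + 1)) ∧
    y = ∑ i ∈ Finset.range m, max (f (σ i) - f (σ (i + 1))) 0}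

/-- **Lemma 6.11.** The set `{f : V₋(f) ≤ 1}` is closed under Skorokhod convergence:
if `V₋(Fₙ) ≤ 1` for all `n` and there are strictly increasing continuous bijections `λₙ`
of `[0,1]` onto itself with `λₙ → id` and `Fₙ ∘ λₙ → f` uniformly on `[0,1]`, then
`V₋(f) ≤ 1`. -/
theorem stmt_12
    (F : ℕ → ℝ → ℝ) (f : ℝ → ℝ) (l : ℕ → ℝ → ℝ)
    (hF : ∀ n, ∀ y ∈ negVarSums (F n), y ≤ 1)
    (hl_cont : ∀ n, ContinuousOn (l n) (Set.Icc 0 1))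
    (hl_mono : ∀ n, StrictMonoOn (l n) (Set.Icc 0 1))
    (hl_bij : ∀ n, Set.BijOn (l n) (Set.Icc 0 1) (Set.Icc 0 1))
    (hl_unif : TendstoUniformlyOn (fun n t => l n t) (fun t => t) Filter.atTop
      (Set.Icc 0 1))
    (hF_unif : TendstoUniformlyOn (fun n t => F n (l n t)) f Filter.atTop
      (Set.Icc 0 1)) :
    ∀ y ∈ negVarSums f, y ≤ 1 := by
  rintro y ⟨m, σ, h0, h1, hmono, rfl⟩
  -- the σ i for i ≤ m lie in [0,1]
  have hchain : ∀ j ≤ m, ∀ i ≤ j, σ i ≤ σ j := by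
    intro j hj
    induction j with
    | zero => intro i hi; rw [Nat.le_zero.mp hi]
    | succ k ih =>
      intro i hi
      rcases Nat.lt_or_ge i (k + 1) with h | h
      · exact le_trans (ih (by omega) i (by omega)) (le_of_lt (hmono k (by omega)))
      · have : i = k + 1 := by omega
        simp [this]
  have hmem : ∀ i ≤ m, σ i ∈ Set.Icc (0 : ℝ) 1 := by
    intro i hi
    exact ⟨le_trans h0 (hchain i hi 0 (Nat.zero_le _)), le_trans (hchain m le_rfl i hi) h1⟩
  -- approximating sums
  set S : ℕ → ℝ := fun n => ∑ i ∈ Finset.range m,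
    max (F n (l n (σ i)) - F n (l n (σ (i + 1)))) 0 with hS
  have hSle : ∀ n, S n ≤ 1 := by
    intro n
    apply hF n
    refine ⟨m, fun i => l n (σ i), ?_, ?_, ?_, rfl⟩
    · exact ((hl_bij n).mapsTo (hmem 0 (Nat.zero_le _))).1
    · exact ((hl_bij n).mapsTo (hmem m le_rfl)).2
    · intro i hi
      exact hl_mono n (hmem i (le_of_lt hi)) (hmem (i + 1) hi) (hmono i hi)
  have hTend : Tendsto S atTop (𝓝 (∑ i ∈ Finset.range m,
      max (f (σ i) - f (σ (i + 1))) 0)) := by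
    apply tendsto_finset_sum
    intro i hi
    rw [Finset.mem_range] at hi
    have h₁ : Tendsto (fun n => F n (l n (σ i))) atTop (𝓝 (f (σ i))) :=
      hF_unif.tendsto_at (hmem i (le_of_lt hi))
    have h₂ : Tendsto (fun n => F n (l n (σ (i + 1)))) atTop (𝓝 (f (σ (i + 1)))) :=
      hF_unif.tendsto_at (hmem (i + 1) hi)
    exact (h₁.sub h₂).max tendsto_const_nhds
  exact le_of_tendsto hTend (Eventually.of_forall hSle)
end

section
/- Let T > 0, let b : [0,T] → [0,∞) be bounded measurable with ‖b‖∞ = sup_{t∈[0,T]} b(t), and let μ be a Borel probability measure on [0,∞). Let f : [0,T] → ℝ be continuously differentiable and satisfy the boundary condition −f′(0) + b(0) (∫ f(min(y,T)) dμ(y) − f(0)) = 0. Then for every point x* ∈ [0,T] at which |f| attains its maximum over [0,T], one has (−f′(x*) − 2‖b‖∞ f(x*)) · f(x*) ≤ 0. -/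
open MeasureTheory Filter Topology

/-- **Dissipativity estimate from the proof of Proposition 3.5.**
Let `b : [0,T] → [0,∞)` be bounded measurable with `B = ‖b‖∞`, `μ` a Borel probability
measure on `[0,∞)`, and `f ∈ C¹([0,T])` satisfying the boundary condition
`-f'(0) + b(0)(∫ f(min(y,T)) dμ(y) - f(0)) = 0`. Then at any maximum point `x*` of `|f|`
on `[0,T]` one has `(-f'(x*) - 2 B f(x*)) f(x*) ≤ 0`. -/
theorem stmt_15
    (T : ℝ) (hT : 0 < T)
    (b : ℝ → ℝ) (hb_meas : Measurable b)
    (hb_nonneg : ∀ t ∈ Set.Icc (0:ℝ) T, 0 ≤ b t)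
    (hb_bdd : BddAbove (b '' Set.Icc 0 T))
    (B : ℝ) (hB : B = sSup (b '' Set.Icc 0 T))
    (μ : Measure ℝ) [IsProbabilityMeasure μ]
    (hμ : μ (Set.Iio 0) = 0)
    (f f' : ℝ → ℝ)
    (hf_deriv : ∀ t ∈ Set.Icc (0:ℝ) T, HasDerivWithinAt f (f' t) (Set.Icc 0 T) t)
    (hf'_cont : ContinuousOn f' (Set.Icc 0 T))
    (hbc : -f' 0 + b 0 * ((∫ y in Set.Ici (0:ℝ), f (min y T) ∂μ) - f 0) = 0) :
    ∀ x ∈ Set.Icc (0:ℝ) T, IsMaxOn (fun t => |f t|) (Set.Icc 0 T) x →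
      (-f' x - 2 * B * f x) * f x ≤ 0 := by
  intro x hx hmax
  have h0T : (0:ℝ) ∈ Set.Icc (0:ℝ) T := ⟨le_refl 0, hT.le⟩
  have hb0B : b 0 ≤ B := hB ▸ le_csSup hb_bdd ⟨0, h0T, rfl⟩
  have hb0 : 0 ≤ b 0 := hb_nonneg 0 h0T
  have hBnn : 0 ≤ B := hb0.trans hb0B
  -- main inequality: -f' x * f x ≤ 2 * B * (f x)^2
  have key : -f' x * f x ≤ 2 * B * (f x * f x) := by
    rcases eq_or_lt_of_le hx.1 with h0 | hpos
    · -- x = 0 : use the boundary condition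
      subst h0
      have hI : |∫ y in Set.Ici (0:ℝ), f (min y T) ∂μ| ≤ |f 0| := by
        have hbound : ∀ᵐ y ∂(μ.restrict (Set.Ici (0:ℝ))), ‖f (min y T)‖ ≤ |f 0| := by
          rw [ae_restrict_iff' measurableSet_Ici]
          filter_upwards with y hy
          have : min y T ∈ Set.Icc (0:ℝ) T := ⟨le_min hy hT.le, min_le_right _ _⟩
          simpa [Real.norm_eq_abs] using hmax this
        have := norm_integral_le_of_norm_le_const (μ := μ.restrict (Set.Ici (0:ℝ)))
          (f := fun y => f (min y T)) (C := |f 0|) hbound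
        have hμ1 : (μ.restrict (Set.Ici (0:ℝ))) Set.univ = 1 := by
          rw [Measure.restrict_apply_univ, ← Set.compl_Iio,
            measure_compl measurableSet_Iio (measure_ne_top _ _), hμ]
          simp
        rw [measureReal_def, hμ1] at this
        simpa [Real.norm_eq_abs] using this
      set I := ∫ y in Set.Ici (0:ℝ), f (min y T) ∂μ with hIdef
      have hf'0 : f' 0 = b 0 * (I - f 0) := by linarith [hbc]
      have hchain : |I * f 0| ≤ f 0 * f 0 := by
        rw [abs_mul]
        calc |I| * |f 0| ≤ |f 0| * |f 0| :=
              mul_le_mul_of_nonneg_right hI (abs_nonneg (f 0))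
          _ = f 0 * f 0 := abs_mul_abs_self (f 0)
      have h1 : f 0 * f 0 - I * f 0 ≤ 2 * (f 0 * f 0) := by
        have := neg_abs_le (I * f 0); linarith
      have h2 : 0 ≤ f 0 * f 0 - I * f 0 := by
        have := le_abs_self (I * f 0); linarith
      calc -f' 0 * f 0 = b 0 * (f 0 * f 0 - I * f 0) := by rw [hf'0]; ring
        _ ≤ B * (f 0 * f 0 - I * f 0) := mul_le_mul_of_nonneg_right hb0B h2
        _ ≤ B * (2 * (f 0 * f 0)) := mul_le_mul_of_nonneg_left h1 hBnn
        _ = 2 * B * (f 0 * f 0) := by ring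
    · -- x > 0 : g = f² has a max at x, derivative from the left is nonneg
      have hg : HasDerivWithinAt (fun t => f t * f t) (f' x * f x + f x * f' x)
          (Set.Icc 0 T) x := (hf_deriv x hx).mul (hf_deriv x hx)
      have hgmax : IsMaxOn (fun t => f t * f t) (Set.Icc 0 T) x := by
        intro t ht
        have := hmax ht
        simp only [Set.mem_setOf_eq] at this ⊢
        nlinarith [abs_mul_abs_self (f t), abs_mul_abs_self (f x), abs_nonneg (f t),
          abs_nonneg (f x)]
      have hcone : (0:ℝ) - x ∈ posTangentConeAt (Set.Icc (0:ℝ) T) x := by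
        apply sub_mem_posTangentConeAt_of_segment_subset
        rw [segment_eq_Icc' x 0, min_eq_right hx.1, max_eq_left hx.1]
        exact Set.Icc_subset_Icc le_rfl hx.2
      have hloc : IsLocalMaxOn (fun t => f t * f t) (Set.Icc (0:ℝ) T) x :=
        hgmax.filter_mono inf_le_right
      have := hloc.hasFDerivWithinAt_nonpos hg.hasFDerivWithinAt hcone
      simp only [ContinuousLinearMap.smulRight_apply, ContinuousLinearMap.one_apply,
        ContinuousLinearMap.toSpanSingleton_apply,
        smul_eq_mul] at this
      have hder : 0 ≤ f' x * f x := by nlinarith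
      nlinarith [mul_nonneg hBnn (mul_self_nonneg (f x))]
  nlinarith [key]
end

section
/- Let T > 0, let b : [0,T] → [0,∞) be bounded measurable with ‖b‖∞ = sup_{t∈[0,T]} b(t), and let μ be a Borel probability measure on [0,∞). Then for every λ > ‖b‖∞ and every continuous g : [0,T] → ℝ, there exists a continuously differentiable f : [0,T] → ℝ such that λ f(t) + f′(t) = g(t) for all t ∈ [0,T] and −f′(0) + b(0) (∫ f(min(y,T)) dμ(y) − f(0)) = 0. -/
open MeasureTheory Filter Topology

/-- **Resolvent (range) step in the proof of Proposition 3.5.**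
Let `b : [0,T] → [0,∞)` be bounded measurable with `B = ‖b‖∞` and `μ` a Borel probability
measure on `[0,∞)`. For every `λ > B` and every continuous `g : [0,T] → ℝ` there is an
`f ∈ C¹([0,T])` with `λ f + f' = g` on `[0,T]` and
`-f'(0) + b(0)(∫ f(min(y,T)) dμ(y) - f(0)) = 0`. -/
theorem stmt_16
    (T : ℝ) (hT : 0 < T)
    (b : ℝ → ℝ) (hb_meas : Measurable b)
    (hb_nonneg : ∀ t ∈ Set.Icc (0:ℝ) T, 0 ≤ b t)
    (hb_bdd : BddAbove (b '' Set.Icc 0 T))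
    (B : ℝ) (hB : B = sSup (b '' Set.Icc 0 T))
    (μ : Measure ℝ) [IsProbabilityMeasure μ]
    (hμ : μ (Set.Iio 0) = 0)
    (lam : ℝ) (hlam : B < lam)
    (g : ℝ → ℝ) (hg : ContinuousOn g (Set.Icc 0 T)) :
    ∃ f f' : ℝ → ℝ,
      (∀ t ∈ Set.Icc (0:ℝ) T, HasDerivWithinAt f (f' t) (Set.Icc 0 T) t) ∧
      ContinuousOn f' (Set.Icc 0 T) ∧
      (∀ t ∈ Set.Icc (0:ℝ) T, lam * f t + f' t = g t) ∧
      -f' 0 + b 0 * ((∫ y in Set.Ici (0:ℝ), f (min y T) ∂μ) - f 0) = 0 := by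
  -- basic facts
  have h0T : (0:ℝ) ∈ Set.Icc (0:ℝ) T := ⟨le_rfl, hT.le⟩
  have hb0 : b 0 ≤ B := hB ▸ le_csSup hb_bdd ⟨0, h0T, rfl⟩
  have hb0nn : 0 ≤ b 0 := hb_nonneg 0 h0T
  have hlam0 : 0 < lam := lt_of_le_of_lt (hb0nn.trans hb0) hlam
  -- continuous extension of g
  set g' : ℝ → ℝ := fun t => g (max 0 (min t T)) with hg'def
  have hproj : ∀ x : ℝ, max 0 (min x T) ∈ Set.Icc (0:ℝ) T := by
    intro x
    exact ⟨le_max_left _ _, max_le hT.le (min_le_right x T)⟩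
  have hg'c : Continuous g' := by
    apply hg.comp_continuous (continuous_const.max (continuous_id.min continuous_const))
    exact hproj
  have hg'eq : ∀ t ∈ Set.Icc (0:ℝ) T, g' t = g t := by
    intro t ht
    simp only [hg'def]
    rw [min_eq_left ht.2, max_eq_right ht.1]
  -- the antiderivative
  set G : ℝ → ℝ := fun t => ∫ s in (0:ℝ)..t, Real.exp (lam * s) * g' s with hGdef
  have hcont : Continuous fun s => Real.exp (lam * s) * g' s :=
    (Real.continuous_exp.comp (continuous_const.mul continuous_id)).mul hg'c
  have hG : ∀ t, HasDerivAt G (Real.exp (lam * t) * g' t) t := by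
    intro t
    exact intervalIntegral.integral_hasDerivAt_right (hcont.intervalIntegrable 0 t)
      (hcont.stronglyMeasurableAtFilter _ _) hcont.continuousAt
  have hGc : Continuous G := by
    apply continuous_iff_continuousAt.2
    intro t
    exact (hG t).continuousAt
  -- the integrals
  set A : ℝ := ∫ y in Set.Ici (0:ℝ), Real.exp (-(lam * min y T)) ∂μ with hAdef
  set H : ℝ := ∫ y in Set.Ici (0:ℝ), Real.exp (-(lam * min y T)) * G (min y T) ∂μ with hHdef
  -- integrability helper
  have integ : ∀ F : ℝ → ℝ, Continuous F → ∀ M : ℝ, (∀ y ∈ Set.Ici (0:ℝ), |F y| ≤ M) →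
      Integrable F (μ.restrict (Set.Ici 0)) := by
    intro F hF M hM
    refine Integrable.mono' (integrable_const M) hF.aestronglyMeasurable ?_
    filter_upwards [ae_restrict_mem measurableSet_Ici] with y hy
    simpa [Real.norm_eq_abs] using hM y hy
  have hminmem : ∀ y ∈ Set.Ici (0:ℝ), min y T ∈ Set.Icc (0:ℝ) T := by
    intro y hy
    exact ⟨le_min hy hT.le, min_le_right y T⟩
  -- bound helper for functions of the form φ (min y T)
  have bdd : ∀ φ : ℝ → ℝ, Continuous φ →
      ∃ M : ℝ, ∀ y ∈ Set.Ici (0:ℝ), |φ (min y T)| ≤ M := by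
    intro φ hφ
    obtain ⟨M, hM⟩ := (isCompact_Icc (a := (0:ℝ)) (b := T)).exists_bound_of_continuousOn
      hφ.continuousOn
    exact ⟨M, fun y hy => by simpa [Real.norm_eq_abs] using hM _ (hminmem y hy)⟩
  have hexpc : Continuous fun t : ℝ => Real.exp (-(lam * t)) :=
    Real.continuous_exp.comp (continuous_const.mul continuous_id).neg
  have hminc : Continuous fun y : ℝ => min y T := continuous_id.min continuous_const
  have hcontmin : Continuous fun y : ℝ => Real.exp (-(lam * min y T)) := hexpc.comp hminc
  have hcontmin2 : Continuous fun y : ℝ => Real.exp (-(lam * min y T)) * G (min y T) :=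
    hcontmin.mul (hGc.comp hminc)
  obtain ⟨M1, hM1⟩ := bdd (fun t => Real.exp (-(lam * t))) hexpc
  obtain ⟨M2, hM2⟩ := bdd (fun t => Real.exp (-(lam * t)) * G t) (hexpc.mul hGc)
  have intA : Integrable (fun y => Real.exp (-(lam * min y T))) (μ.restrict (Set.Ici 0)) :=
    integ _ hcontmin M1 hM1
  have intH : Integrable (fun y => Real.exp (-(lam * min y T)) * G (min y T))
      (μ.restrict (Set.Ici 0)) := integ _ hcontmin2 M2 hM2
  -- μ (Ici 0) = 1
  have hIci : μ (Set.Ici (0:ℝ)) = 1 := by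
    have := measure_compl (measurableSet_Iio (a := (0:ℝ))) (measure_ne_top μ _)
    rw [Set.compl_Iio] at this
    simp [hμ, this]
  -- bounds on A
  have hA0 : 0 ≤ A :=
    setIntegral_nonneg measurableSet_Ici (fun y _ => (Real.exp_pos _).le)
  have hA1 : A ≤ 1 := by
    have h1 : A ≤ ∫ _ in Set.Ici (0:ℝ), (1:ℝ) ∂μ := by
      apply setIntegral_mono_on intA (integrable_const 1) measurableSet_Ici
      intro y hy
      rw [← Real.exp_zero]
      apply Real.exp_le_exp.2
      have := (hminmem y hy).1
      nlinarith
    rw [setIntegral_const, measureReal_def, hIci] at h1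
    simpa using h1
  -- the constant
  set D : ℝ := lam + b 0 * (A - 1) with hDdef
  have hD : 0 < D := by nlinarith [lt_of_le_of_lt hb0 hlam]
  set c : ℝ := (g 0 - b 0 * H) / D with hcdef
  have hcD : c * D = g 0 - b 0 * H := div_mul_cancel₀ _ hD.ne'
  -- the solution
  set f : ℝ → ℝ := fun t => Real.exp (-(lam * t)) * (c + G t) with hfdef
  set f' : ℝ → ℝ := fun t => g' t - lam * f t with hf'def
  have hfderiv : ∀ t, HasDerivAt f (f' t) t := by
    intro t
    have he : HasDerivAt (fun t : ℝ => Real.exp (-(lam * t)))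
        (Real.exp (-(lam * t)) * -lam) t := by
      simpa using (((hasDerivAt_id t).const_mul lam).neg).exp
    have : HasDerivAt (fun x => Real.exp (-(lam * x)) * (c + G x)) _ t := he.mul ((hG t).const_add c)
    convert this using 1
    have hexp1 : Real.exp (-(lam * t)) * Real.exp (lam * t) = 1 := by
      rw [← Real.exp_add]; simp
    simp only [hf'def, hfdef]
    linear_combination (-(g' t)) * hexp1
  have hfc : Continuous f := hexpc.mul (continuous_const.add hGc)
  have hf'c : Continuous f' := by
    simp only [hf'def]
    exact hg'c.sub (continuous_const.mul hfc)
  have hf0 : f 0 = c := by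
    simp [hfdef, hGdef, intervalIntegral.integral_same]
  -- integral of f (min y T)
  have hint : (∫ y in Set.Ici (0:ℝ), f (min y T) ∂μ) = c * A + H := by
    have heq : ∀ y : ℝ, f (min y T) =
        c * Real.exp (-(lam * min y T)) + Real.exp (-(lam * min y T)) * G (min y T) := by
      intro y; simp only [hfdef]; ring
    simp_rw [heq]
    rw [integral_add (intA.const_mul c) intH, integral_const_mul]
  refine ⟨f, f', ?_, hf'c.continuousOn, ?_, ?_⟩
  · intro t _; exact (hfderiv t).hasDerivWithinAt
  · intro t ht
    simp only [hf'def]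
    rw [hg'eq t ht]
    ring
  · rw [hint, hf0]
    have hf'0 : f' 0 = g 0 - lam * c := by
      simp only [hf'def]
      rw [hg'eq 0 h0T, hf0]
    rw [hf'0]
    simp only [hDdef] at hcD
    nlinarith [hcD]
end

section
/- Let b : [0,∞) → [0,∞) be a function, K a Markov kernel from [0,∞) to [0,∞), and S : [0,∞) → (0,∞) a differentiable function such that KS(x) := ∫ S(x+y) K(x,dy) is finite for every x ≥ 0 and S′(x) = b(x) (KS(x) − S(x)) for all x ≥ 0 (i.e. S is harmonic for the generator Lf(x) = −f′(x) + b(x)∫(f(x+y) − f(x))K(x,dy)). Then for every differentiable f : [0,∞) → ℝ such that ∫ S(x+y)|f(x+y)| K(x,dy) < ∞ for all x, and for all x ≥ 0: L(fS)(x)/S(x) = −f′(x) + (b(x) KS(x)/S(x)) · ( (∫ S(x+y) f(x+y) K(x,dy)) / KS(x) − f(x) ). -/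
open MeasureTheory ProbabilityTheory Filter Topology

/-- **Doob h-transform identity from the proof of Theorem 4.7.**
If `S > 0` is differentiable and harmonic for the generator
`Lf(x) = -f'(x) + b(x) ∫ (f(x+y) - f(x)) K(x,dy)`, i.e.
`S'(x) = b(x) (KS(x) - S(x))` where `KS(x) = ∫ S(x+y) K(x,dy)`, then for differentiable `f`
with `∫ S(x+y)|f(x+y)| K(x,dy) < ∞`:
`L(fS)(x)/S(x) = -f'(x) + (b(x) KS(x)/S(x)) (K(Sf)(x)/KS(x) - f(x))`. -/
theorem stmt_18
    (b : ℝ → ℝ)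
    (K : Kernel ℝ ℝ) [IsMarkovKernel K]
    (hK_supp : ∀ x : ℝ, (K x) (Set.Iio 0) = 0)
    (S : ℝ → ℝ) (hS_pos : ∀ x ≥ (0:ℝ), 0 < S x) (hS_diff : Differentiable ℝ S)
    (hKS_int : ∀ x ≥ (0:ℝ), Integrable (fun y => S (x + y)) (K x))
    (hharm : ∀ x ≥ (0:ℝ), deriv S x = b x * ((∫ y, S (x + y) ∂(K x)) - S x))
    (f : ℝ → ℝ) (hf_diff : Differentiable ℝ f)
    (hint : ∀ x ≥ (0:ℝ), Integrable (fun y => S (x + y) * |f (x + y)|) (K x)) :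
    ∀ x ≥ (0:ℝ),
      (-(deriv (fun z => f z * S z) x) +
          b x * ∫ y, (f (x + y) * S (x + y) - f x * S x) ∂(K x)) / S x =
        -(deriv f x) +
          (b x * (∫ y, S (x + y) ∂(K x)) / S x) *
            ((∫ y, S (x + y) * f (x + y) ∂(K x)) / (∫ y, S (x + y) ∂(K x)) - f x) := by
  intro x hx
  have hprob : IsProbabilityMeasure (K x) := inferInstance
  have hae : ∀ᵐ y ∂(K x), 0 ≤ y := by
    rw [ae_iff]
    simpa [Set.Iio, not_le] using hK_supp x
  have hSpos_ae : ∀ᵐ y ∂(K x), 0 < S (x + y) := by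
    filter_upwards [hae] with y hy
    exact hS_pos _ (by linarith)
  have hcont : Continuous fun y => f (x + y) * S (x + y) :=
    ((hf_diff.continuous.comp (continuous_const.add continuous_id)).mul
      (hS_diff.continuous.comp (continuous_const.add continuous_id)))
  have hSf_int : Integrable (fun y => f (x + y) * S (x + y)) (K x) := by
    refine (hint x hx).mono' hcont.aestronglyMeasurable ?_
    filter_upwards [hSpos_ae] with y hy
    rw [Real.norm_eq_abs, abs_mul, abs_of_pos hy, mul_comm]
  have hKS_pos : 0 < ∫ y, S (x + y) ∂(K x) := by
    rw [integral_pos_iff_support_of_nonneg_ae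
      (hSpos_ae.mono fun y hy => hy.le) (hKS_int x hx)]
    have h1 : (K x) Set.univ ≤ (K x) (Function.support fun y => S (x + y)) := by
      refine measure_mono_ae ?_
      filter_upwards [hSpos_ae] with y hy _
      exact ne_of_gt hy
    calc (0:ENNReal) < 1 := by norm_num
      _ = (K x) Set.univ := (measure_univ).symm
      _ ≤ _ := h1
  have hderiv : deriv (fun z => f z * S z) x
      = deriv f x * S x + f x * deriv S x := deriv_mul (hf_diff x) (hS_diff x)
  have hsplit : (∫ y, (f (x + y) * S (x + y) - f x * S x) ∂(K x))
      = (∫ y, S (x + y) * f (x + y) ∂(K x)) - f x * S x := by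
    rw [integral_sub hSf_int (integrable_const _), integral_const, probReal_univ]
    simp [mul_comm]
  rw [hderiv, hsplit, hharm x hx]
  have hS : S x ≠ 0 := ne_of_gt (hS_pos x hx)
  have hKS : (∫ y, S (x + y) ∂(K x)) ≠ 0 := ne_of_gt hKS_pos
  field_simp
  ring
end
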